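/- arXiv:1907.12543 — 8 statements merged into one kernel-verified Lean document; each statement's English description precedes it below -/
import Mathlib

section
/- Let α be an alphabet and let a : ℕ → α be a sequence in the class 𝒞. Then for every x ∈ ℕ the block a(4x)a(4x+1)a(4x+2)a(4x+3) is of the form x y y x with distinct letters, i.e. a(4x) = a(4x+3), a(4x+1) = a(4x+2) and a(4x) ≠ a(4x+1); consequently a(2n) ≠ a(2n+1) for every n ∈ ℕ. -/
/-- Membership in the class 𝒞: there exist a letter `c`, bijections `f n`,
and words `w n` with `w 0 = [c]`,
`w (n+1) = w n ++ f n (w n) ++ f n (w n) ++ w n`, `f n (w n) ≠ w n`,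
and `w n` is the prefix of `a` of length `4 ^ n`. -/
def InC {α : Type*} (a : ℕ → α) : Prop :=
  ∃ (c : α) (f : ℕ → α ≃ α) (w : ℕ → List α),
    w 0 = [c] ∧
    (∀ n, w (n + 1) = w n ++ (w n).map (f n) ++ (w n).map (f n) ++ w n) ∧
    (∀ n, (w n).map (f n) ≠ w n) ∧
    (∀ n, w n = (List.range (4 ^ n)).map a)

/-- The factor `a(x) a(x+1) ⋯ a(x+y-1)` of the sequence `a`. -/
def factor {α : Type*} (a : ℕ → α) (x y : ℕ) : List α :=
  (List.range y).map (fun i => a (x + i))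

/-- The prefix of `a` of length `n`. -/
def prefixWord {α : Type*} (a : ℕ → α) (n : ℕ) : List α :=
  factor a 0 n

/-- The palindromic length of a finite word: the least number of palindromes
whose concatenation is the word (0 for the empty word). -/
noncomputable def palLen {α : Type*} (w : List α) : ℕ :=
  sInf {k | ∃ ps : List (List α),
    ps.length = k ∧ (∀ p ∈ ps, p.Palindrome) ∧ ps.flatten = w}

/-- `P a n` is the palindromic length of the prefix of `a` of length `n`. -/
noncomputable def P {α : Type*} (a : ℕ → α) (n : ℕ) : ℕ :=
  palLen (prefixWord a n)

/-- The factor of length `y` at position `x` is embedded into the center of the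
factor of length `4 * r` at position `4 * z`. -/
def EmbedCenter (x y z r : ℕ) : Prop :=
  4 * z ≤ x ∧ x + y ≤ 4 * z + 4 * r ∧ x - 4 * z = (4 * z + 4 * r) - (x + y)

/-- The Thue–Morse sequence: `true` iff the number of ones in the binary
expansion is odd. -/
def thueMorse (n : ℕ) : Bool :=
  (Nat.digits 2 n).count 1 % 2 == 1

private lemma shift_aux {α : Type*} (a : ℕ → α) (f : α ≃ α) (n j : ℕ) (hj : j < 4^n)
    (h : (List.range (4^(n+1))).map a =
      (List.range (4^n)).map a ++ ((List.range (4^n)).map a).map f ++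
      ((List.range (4^n)).map a).map f ++ (List.range (4^n)).map a) :
    a (4^n + j) = f (a j) ∧ a (2*4^n + j) = f (a j) ∧ a (3*4^n + j) = a j := by
  have h4 : 4^(n+1) = 4 * 4^n := by ring
  refine ⟨?_, ?_, ?_⟩
  · have hh := congrArg (fun l => l[4^n + j]?) h
    simp only [List.getElem?_map, List.getElem?_range, List.getElem?_append,
      List.length_append, List.length_map, List.length_range] at hh
    split_ifs at hh <;> try omega
    rw [show 4^n+j-4^n = j from by omega] at hh
    have h1 : 4^n+j < 4^(n+1) := by omega
    simp [List.getElem?_range, h1, hj] at hh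
    exact hh
  · have hh := congrArg (fun l => l[2*4^n + j]?) h
    simp only [List.getElem?_map, List.getElem?_range, List.getElem?_append,
      List.length_append, List.length_map, List.length_range] at hh
    split_ifs at hh <;> try omega
    rw [show 2*4^n+j-(4^n+4^n) = j from by omega] at hh
    have h1 : 2*4^n+j < 4^(n+1) := by omega
    simp [List.getElem?_range, h1, hj] at hh
    exact hh
  · have hh := congrArg (fun l => l[3*4^n + j]?) h
    simp only [List.getElem?_map, List.getElem?_range, List.getElem?_append,
      List.length_append, List.length_map, List.length_range] at hh
    split_ifs at hh <;> try omega
    rw [show 3*4^n+j-(4^n+4^n+4^n) = j from by omega] at hh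
    have h1 : 3*4^n+j < 4^(n+1) := by omega
    simp [List.getElem?_range, h1, hj] at hh
    exact hh

theorem stmt0 {α : Type*} (a : ℕ → α) (hC : InC a) :
    (∀ x : ℕ, a (4 * x) = a (4 * x + 3) ∧ a (4 * x + 1) = a (4 * x + 2) ∧
      a (4 * x) ≠ a (4 * x + 1)) ∧
    (∀ n : ℕ, a (2 * n) ≠ a (2 * n + 1)) := by
  obtain ⟨c, f, w, hw0, hrec, hne, hpre⟩ := hC
  have hshift : ∀ n j, j < 4^n →
      a (4^n + j) = f n (a j) ∧ a (2*4^n + j) = f n (a j) ∧ a (3*4^n + j) = a j := by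
    intro n j hj
    have h := hrec n
    rw [hpre (n+1), hpre n] at h
    exact shift_aux a (f n) n j hj h
  have hne0 : f 0 (a 0) ≠ a 0 := by
    have h := hne 0
    rw [hpre 0] at h
    simpa using h
  have main : ∀ n x, 4*x+3 < 4^n →
      a (4*x) = a (4*x+3) ∧ a (4*x+1) = a (4*x+2) ∧ a (4*x) ≠ a (4*x+1) := by
    intro n
    induction n with
    | zero => intro x hx; simp at hx
    | succ n ih =>
      intro x hx
      rcases Nat.eq_zero_or_pos n with rfl | hn
      · have hx0 : x = 0 := by omega
        subst hx0
        have s := hshift 0 0 (by norm_num)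
        norm_num at s ⊢
        obtain ⟨s1, s2, s3⟩ := s
        exact ⟨s3.symm, by rw [s1, s2], fun h => hne0 (by rw [← s1, ← h])⟩
      · have h4 : (4:ℕ) ∣ 4^n := dvd_pow_self 4 hn.ne'
        obtain ⟨m, hm⟩ := h4
        have hpow : 4^(n+1) = 4 * 4^n := by ring
        by_cases c1 : 4*x+3 < 4^n
        · exact ih x c1
        · by_cases c2 : 4*x < 2*4^n
          · set y := x - m with hy
            have hyx : 4*x = 4^n + 4*y := by omega
            have hy3 : 4*y+3 < 4^n := by omega
            obtain ⟨p0, p1, p2⟩ := ih y hy3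
            have e0 : a (4*x) = f n (a (4*y)) := by
              rw [show 4*x = 4^n + 4*y from hyx]; exact (hshift n (4*y) (by omega)).1
            have e1 : a (4*x+1) = f n (a (4*y+1)) := by
              rw [show 4*x+1 = 4^n + (4*y+1) by omega]; exact (hshift n (4*y+1) (by omega)).1
            have e2 : a (4*x+2) = f n (a (4*y+2)) := by
              rw [show 4*x+2 = 4^n + (4*y+2) by omega]; exact (hshift n (4*y+2) (by omega)).1
            have e3 : a (4*x+3) = f n (a (4*y+3)) := by
              rw [show 4*x+3 = 4^n + (4*y+3) by omega]; exact (hshift n (4*y+3) (by omega)).1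
            exact ⟨by rw [e0, e3, p0], by rw [e1, e2, p1],
              fun h => p2 ((f n).injective (by rw [← e0, ← e1, h]))⟩
          · by_cases c3 : 4*x < 3*4^n
            · set y := x - 2*m with hy
              have hyx : 4*x = 2*4^n + 4*y := by omega
              have hy3 : 4*y+3 < 4^n := by omega
              obtain ⟨p0, p1, p2⟩ := ih y hy3
              have e0 : a (4*x) = f n (a (4*y)) := by
                rw [show 4*x = 2*4^n + 4*y from hyx]; exact (hshift n (4*y) (by omega)).2.1
              have e1 : a (4*x+1) = f n (a (4*y+1)) := by
                rw [show 4*x+1 = 2*4^n + (4*y+1) by omega]; exact (hshift n (4*y+1) (by omega)).2.1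
              have e2 : a (4*x+2) = f n (a (4*y+2)) := by
                rw [show 4*x+2 = 2*4^n + (4*y+2) by omega]; exact (hshift n (4*y+2) (by omega)).2.1
              have e3 : a (4*x+3) = f n (a (4*y+3)) := by
                rw [show 4*x+3 = 2*4^n + (4*y+3) by omega]; exact (hshift n (4*y+3) (by omega)).2.1
              exact ⟨by rw [e0, e3, p0], by rw [e1, e2, p1],
                fun h => p2 ((f n).injective (by rw [← e0, ← e1, h]))⟩
            · set y := x - 3*m with hy
              have hyx : 4*x = 3*4^n + 4*y := by omega
              have hy3 : 4*y+3 < 4^n := by omega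
              obtain ⟨p0, p1, p2⟩ := ih y hy3
              have e0 : a (4*x) = a (4*y) := by
                rw [show 4*x = 3*4^n + 4*y from hyx]; exact (hshift n (4*y) (by omega)).2.2
              have e1 : a (4*x+1) = a (4*y+1) := by
                rw [show 4*x+1 = 3*4^n + (4*y+1) by omega]; exact (hshift n (4*y+1) (by omega)).2.2
              have e2 : a (4*x+2) = a (4*y+2) := by
                rw [show 4*x+2 = 3*4^n + (4*y+2) by omega]; exact (hshift n (4*y+2) (by omega)).2.2
              have e3 : a (4*x+3) = a (4*y+3) := by
                rw [show 4*x+3 = 3*4^n + (4*y+3) by omega]; exact (hshift n (4*y+3) (by omega)).2.2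
              exact ⟨by rw [e0, e3, p0], by rw [e1, e2, p1],
                fun h => p2 (by rw [← e0, ← e1, h])⟩
  have part1 : ∀ x : ℕ, a (4*x) = a (4*x+3) ∧ a (4*x+1) = a (4*x+2) ∧ a (4*x) ≠ a (4*x+1) := by
    intro x
    refine main (4*x+4) x ?_
    have : 4*x+4 < 4^(4*x+4) := Nat.lt_pow_self (by norm_num : (1:ℕ) < 4)
    omega
  refine ⟨part1, fun n => ?_⟩
  rcases Nat.even_or_odd n with ⟨k, hk⟩ | ⟨k, hk⟩
  · obtain ⟨_, _, h⟩ := part1 k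
    rw [show 2*n = 4*k by omega]
    exact h
  · obtain ⟨h0, h1, h⟩ := part1 k
    rw [show 2*n = 4*k+2 by omega, show 4*k+2+1 = 4*k+3 by omega, ← h1, ← h0]
    exact fun hh => h hh.symm
end

section
/- Let a : ℕ → α be a sequence in the class 𝒞. If a factor w_a(x, y) of a is a palindrome and y is odd, then y = 1 or y = 3. -/
theorem stmt1 {α : Type*} (a : ℕ → α) (hC : InC a) (x y : ℕ)
    (hpal : (factor a x y).Palindrome) (hodd : Odd y) :
    y = 1 ∨ y = 3 := by
  obtain ⟨c, f, w, hw0, hrec, hf, hw⟩ := hC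
  -- step lemma
  have step : ∀ n i, i < 4^n →
      a (4^n + i) = f n (a i) ∧ a (2*4^n + i) = f n (a i) ∧ a (3*4^n + i) = a i := by
    intro n i hi
    have h := hrec n
    rw [hw n, hw (n+1)] at h
    set N := 4^n with hN
    set A : List α := (List.range N).map a with hAdef
    set B : List α := A.map (f n) with hBdef
    have hA : A.length = N := by simp [hAdef]
    have hB : B.length = N := by simp [hBdef, hAdef]
    have h4 : 4^(n+1) = 4*N := by rw [hN]; ring
    have key : ∀ j, j < 4*N → (A ++ B ++ B ++ A)[j]? = some (a j) := by
      intro j hj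
      rw [← h]
      simp [List.getElem?_map, List.getElem?_range, h4 ▸ hj]
    have hBi : B[i]? = some (f n (a i)) := by
      simp [hBdef, hAdef, List.getElem?_map, List.getElem?_range, hi]
    have hAi : A[i]? = some (a i) := by
      simp [hAdef, List.getElem?_map, List.getElem?_range, hi]
    refine ⟨?_, ?_, ?_⟩
    · have hk := key (N + i) (by omega)
      rw [List.getElem?_append_left (by simp [hA, hB]; omega),
        List.getElem?_append_left (by simp [hA, hB]; omega),
        List.getElem?_append_right (by omega : A.length ≤ N + i), hA,
        Nat.add_sub_cancel_left, hBi] at hk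
      exact (Option.some_injective _ hk).symm
    · have hk := key (2*N + i) (by omega)
      rw [List.getElem?_append_left (by simp [hA, hB]; omega),
        List.getElem?_append_right (by simp [hA, hB]; omega : (A++B).length ≤ 2*N + i)] at hk
      rw [show 2*N + i - (A++B).length = i by simp [hA, hB]; omega, hBi] at hk
      exact (Option.some_injective _ hk).symm
    · have hk := key (3*N + i) (by omega)
      rw [List.getElem?_append_right (by simp [hA, hB]; omega : (A++B++B).length ≤ 3*N + i)] at hk
      rw [show 3*N + i - (A++B++B).length = i by simp [hA, hB]; omega, hAi] at hk
      exact (Option.some_injective _ hk).symm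
  -- base facts
  have hac : c = a 0 := by
    have h := hw0.symm.trans (hw 0)
    rw [show (4:ℕ)^0 = 1 by norm_num, show List.range 1 = [0] from rfl] at h
    simpa using h
  have hfc : f 0 (a 0) ≠ a 0 := by
    have h := hf 0
    rw [hw0, hac] at h
    simpa using h
  -- block lemma
  have key : ∀ n k, 4*k + 3 < 4^n →
      a (4*k) = a (4*k+3) ∧ a (4*k+1) = a (4*k+2) ∧ a (4*k) ≠ a (4*k+1) := by
    intro n
    induction n with
    | zero => intro k hk; rw [pow_zero] at hk; omega
    | succ n ih =>
      intro k hk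
      rcases Nat.lt_or_ge (4*k+3) (4^n) with hs | hs
      · exact ih k hs
      rcases Nat.eq_zero_or_pos n with rfl | hn
      · have hk0 : k = 0 := by rw [pow_succ, pow_zero] at hk; omega
        subst hk0
        obtain ⟨s1, s2, s3⟩ := step 0 0 (by norm_num)
        norm_num at s1 s2 s3
        refine ⟨by simpa using s3.symm, by simpa using s1.trans s2.symm, ?_⟩
        intro hEq
        simp only [Nat.mul_zero, Nat.zero_add] at hEq
        exact hfc (by rw [← s1, ← hEq])
      · obtain ⟨m, hm⟩ : ∃ m, n = m+1 := ⟨n-1, by omega⟩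
        have hNm : (4:ℕ)^n = 4*4^m := by rw [hm]; ring
        have hks : 4*k + 3 < 4^n*4 := by
          have : (4:ℕ)^(n+1) = 4^n*4 := by ring
          omega
        obtain ⟨q, r, hq4, hr, hp⟩ : ∃ q r, q < 4 ∧ r < 4^n ∧ 4*k = 4^n*q + r :=
          ⟨4*k/4^n, 4*k%4^n, Nat.div_lt_of_lt_mul (by omega),
            Nat.mod_lt _ (by positivity), (Nat.div_add_mod (4*k) (4^n)).symm⟩
        obtain ⟨s, hts⟩ : ∃ s, 4^n*q = 4*s := ⟨4^m*q, by rw [hNm]; ring⟩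
        have h4r : (4:ℕ) ∣ r := by omega
        have hr3 : r + 3 < 4^n := by omega
        obtain ⟨e1, e2, e3⟩ := ih (r/4) (by omega)
        have hr4 : 4*(r/4) = r := by omega
        rw [hr4] at e1 e2 e3
        interval_cases q
        · have hkr : 4*k = r := by omega
          rw [hkr]; exact ⟨e1, e2, e3⟩
        · have A0 : a (4*k) = f n (a r) := by
            rw [show 4*k = 4^n + r by omega]; exact (step n r (by omega)).1
          have A1 : a (4*k+1) = f n (a (r+1)) := by
            rw [show 4*k+1 = 4^n + (r+1) by omega]; exact (step n (r+1) (by omega)).1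
          have A2 : a (4*k+2) = f n (a (r+2)) := by
            rw [show 4*k+2 = 4^n + (r+2) by omega]; exact (step n (r+2) (by omega)).1
          have A3 : a (4*k+3) = f n (a (r+3)) := by
            rw [show 4*k+3 = 4^n + (r+3) by omega]; exact (step n (r+3) (by omega)).1
          refine ⟨by rw [A0, A3, e1], by rw [A1, A2, e2], ?_⟩
          intro hEq
          exact e3 ((f n).injective (by rw [← A0, ← A1]; exact hEq))
        · have A0 : a (4*k) = f n (a r) := by
            rw [show 4*k = 2*4^n + r by omega]; exact (step n r (by omega)).2.1
          have A1 : a (4*k+1) = f n (a (r+1)) := by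
            rw [show 4*k+1 = 2*4^n + (r+1) by omega]; exact (step n (r+1) (by omega)).2.1
          have A2 : a (4*k+2) = f n (a (r+2)) := by
            rw [show 4*k+2 = 2*4^n + (r+2) by omega]; exact (step n (r+2) (by omega)).2.1
          have A3 : a (4*k+3) = f n (a (r+3)) := by
            rw [show 4*k+3 = 2*4^n + (r+3) by omega]; exact (step n (r+3) (by omega)).2.1
          refine ⟨by rw [A0, A3, e1], by rw [A1, A2, e2], ?_⟩
          intro hEq
          exact e3 ((f n).injective (by rw [← A0, ← A1]; exact hEq))
        · have A0 : a (4*k) = a r := by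
            rw [show 4*k = 3*4^n + r by omega]; exact (step n r (by omega)).2.2
          have A1 : a (4*k+1) = a (r+1) := by
            rw [show 4*k+1 = 3*4^n + (r+1) by omega]; exact (step n (r+1) (by omega)).2.2
          have A2 : a (4*k+2) = a (r+2) := by
            rw [show 4*k+2 = 3*4^n + (r+2) by omega]; exact (step n (r+2) (by omega)).2.2
          have A3 : a (4*k+3) = a (r+3) := by
            rw [show 4*k+3 = 3*4^n + (r+3) by omega]; exact (step n (r+3) (by omega)).2.2
          refine ⟨by rw [A0, A3, e1], by rw [A1, A2, e2], ?_⟩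
          intro hEq
          exact e3 (by rw [← A0, ← A1]; exact hEq)
  have keyAll : ∀ k, a (4*k) = a (4*k+3) ∧ a (4*k+1) = a (4*k+2) ∧ a (4*k) ≠ a (4*k+1) := by
    intro k
    refine key (4*k+4) k ?_
    have : 4*k+4 < 4^(4*k+4) := Nat.lt_pow_self (by norm_num : 1 < 4)
    omega
  -- main argument
  by_contra hcon
  push_neg at hcon
  obtain ⟨hy1, hy3⟩ := hcon
  obtain ⟨t, ht⟩ := hodd
  obtain ⟨s, hts⟩ : ∃ s, t = s + 2 := ⟨t - 2, by omega⟩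
  subst hts; subst ht
  -- pointwise palindrome
  have hrev := hpal.reverse_eq
  have hlen : (factor a x (2*(s+2)+1)).length = 2*(s+2)+1 := by simp [factor]
  have hpt : ∀ i, i < 2*(s+2)+1 → a (x + i) = a (x + (2*(s+2) - i)) := by
    intro i hi
    have h1 : (factor a x (2*(s+2)+1))[i]? = some (a (x+i)) := by
      simp [factor, List.getElem?_map, List.getElem?_range, hi]
    have h2 : (factor a x (2*(s+2)+1)).reverse[i]? = some (a (x + (2*(s+2) - i))) := by
      rw [List.getElem?_reverse (by rw [hlen]; omega), hlen,
        show 2*(s+2)+1-1-i = 2*(s+2)-i by omega]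
      simp [factor, List.getElem?_map, List.getElem?_range, show 2*(s+2)-i < 2*(s+2)+1 by omega]
    rw [hrev] at h2
    exact Option.some_injective _ (h1.symm.trans h2)
  have E1 : a (x+s+1) = a (x+s+3) := by
    have h := hpt (s+1) (by omega)
    rw [show x + (s+1) = x+s+1 by omega, show x + (2*(s+2) - (s+1)) = x+s+3 by omega] at h
    exact h
  have E2 : a (x+s) = a (x+s+4) := by
    have h := hpt s (by omega)
    rw [show x + (2*(s+2) - s) = x+s+4 by omega] at h
    exact h
  obtain ⟨k, j, hj, hpk⟩ : ∃ k j, j < 4 ∧ x+s+2 = 4*k + j :=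
    ⟨(x+s+2)/4, (x+s+2)%4, by omega, by omega⟩
  interval_cases j
  · -- p+2 = 4k, k ≥ 1
    obtain ⟨k', rfl⟩ : ∃ k', k = k' + 1 := ⟨k - 1, by omega⟩
    obtain ⟨b1, b2, b3⟩ := keyAll k'
    obtain ⟨c1, c2, c3⟩ := keyAll (k'+1)
    rw [show x+s+1 = 4*k'+3 by omega, show x+s+3 = 4*(k'+1)+1 by omega] at E1
    rw [show x+s+4 = 4*(k'+1)+2 by omega, show x+s = 4*k'+2 by omega] at E2
    exact b3 (by rw [b1, E1, c2, ← E2, ← b2])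
  · obtain ⟨b1, b2, b3⟩ := keyAll k
    rw [show x+s+1 = 4*k by omega, show x+s+3 = 4*k+2 by omega] at E1
    exact b3 (E1.trans b2.symm)
  · obtain ⟨b1, b2, b3⟩ := keyAll k
    rw [show x+s+1 = 4*k+1 by omega, show x+s+3 = 4*k+3 by omega] at E1
    exact b3 (b1.trans E1.symm)
  · obtain ⟨b1, b2, b3⟩ := keyAll k
    obtain ⟨c1, c2, c3⟩ := keyAll (k+1)
    rw [show x+s+1 = 4*k+2 by omega, show x+s+3 = 4*(k+1) by omega] at E1
    rw [show x+s+4 = 4*(k+1)+1 by omega, show x+s = 4*k+1 by omega] at E2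
    exact c3 (E1.symm.trans (b2.symm.trans E2))
end

section
/- Let a : ℕ → α be a sequence in the class 𝒞. If a factor w_a(x, y) of a is a palindrome with y even and y ≥ 2, then either there exist z, r ∈ ℕ such that w_a(4z, 4r) is a palindrome and w_a(x, y) is embedded into the center of w_a(4z, 4r), or x ≡ 3 (mod 4) and y ≡ 2 (mod 4). -/
lemma factor_getElem? {α : Type*} (a : ℕ → α) (x y i : ℕ) (h : i < y) :
    (factor a x y)[i]? = some (a (x + i)) := by
  simp [factor, List.getElem?_map, List.getElem?_range h]

lemma factor_len {α : Type*} (a : ℕ → α) (x y : ℕ) : (factor a x y).length = y := by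
  simp [factor]

lemma pal_sym {α : Type*} {a : ℕ → α} {x y : ℕ} (h : (factor a x y).Palindrome) :
    ∀ i < y, a (x + i) = a (x + (y - 1 - i)) := by
  intro i hi
  have h2 := congrArg (fun l => l[i]?) h.reverse_eq
  rw [List.getElem?_reverse (by rw [factor_len]; exact hi)] at h2
  rw [factor_len, factor_getElem? a x y i hi, factor_getElem? a x y _ (by omega)] at h2
  exact (Option.some_injective _ h2).symm

lemma pal_of_sym {α : Type*} {a : ℕ → α} {x y : ℕ}
    (h : ∀ i < y, a (x + i) = a (x + (y - 1 - i))) : (factor a x y).Palindrome := by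
  apply List.Palindrome.of_reverse_eq
  apply List.ext_getElem?
  intro i
  by_cases hi : i < y
  · rw [List.getElem?_reverse (by rw [factor_len]; exact hi)]
    rw [factor_len, factor_getElem? a x y i hi,
      factor_getElem? a x y _ (by omega)]
    exact congrArg some (h _ (by omega)).symm
  · rw [List.getElem?_eq_none, List.getElem?_eq_none]
    · rw [factor_len]; omega
    · rw [List.length_reverse, factor_len]; omega

lemma range_map_getElem? {α : Type*} (a : ℕ → α) (N i : ℕ) (h : i < N) :
    ((List.range N).map a)[i]? = some (a i) := by
  simp [List.getElem?_map, List.getElem?_range h]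

lemma blocks {α : Type*} {a : ℕ → α} (hC : InC a) (k : ℕ) :
    a (4*k+3) = a (4*k) ∧ a (4*k+2) = a (4*k+1) ∧ a (4*k) ≠ a (4*k+1) := by
  obtain ⟨c, f, w, hw0, hstep, hne, hw⟩ := hC
  have key : ∀ n j, j < 4^n →
      a (4^n + j) = f n (a j) ∧ a (2*4^n + j) = f n (a j) ∧ a (3*4^n + j) = a j := by
    intro n j hj
    have h1 := hstep n
    rw [hw n, hw (n+1)] at h1
    have hlen : ((List.range (4^n)).map a).length = 4^n := by simp
    have hlenm : (((List.range (4^n)).map a).map (f n)).length = 4^n := by simp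
    have hmget : ∀ i, i < 4^n → (((List.range (4^n)).map a).map (f n))[i]? = some (f n (a i)) := by
      intro i hi
      rw [List.getElem?_map, range_map_getElem? a _ _ hi]; rfl
    have ev : ∀ i, i < 4^(n+1) →
        some (a i) = ((List.range (4^n)).map a ++ ((List.range (4^n)).map a).map (f n)
          ++ ((List.range (4^n)).map a).map (f n) ++ (List.range (4^n)).map a)[i]? := by
      intro i hi
      rw [← h1, range_map_getElem? a _ _ hi]
    have hp : (4:ℕ)^(n+1) = 4^n + 4^n + 4^n + 4^n := by ring
    refine ⟨?_, ?_, ?_⟩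
    · have := ev (4^n + j) (by omega)
      rw [List.getElem?_append_left (by simp [List.length_append]; omega),
        List.getElem?_append_left (by simp [List.length_append]; omega),
        List.getElem?_append_right (by simp), hlen,
        show 4^n + j - 4^n = j by omega, hmget j hj] at this
      exact Option.some_injective _ this
    · have := ev (2*4^n + j) (by omega)
      rw [List.getElem?_append_left (by simp [List.length_append]; omega),
        List.getElem?_append_right (by simp [List.length_append]; omega),
        List.length_append, hlen, hlenm,
        show 2*4^n + j - (4^n + 4^n) = j by omega, hmget j hj] at this
      exact Option.some_injective _ this
    · have := ev (3*4^n + j) (by omega)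
      rw [List.getElem?_append_right (by simp [List.length_append]; omega),
        List.length_append, List.length_append, hlen, hlenm,
        show 3*4^n + j - (4^n + 4^n + 4^n) = j by omega,
        range_map_getElem? a _ _ hj] at this
      exact Option.some_injective _ this
  have h0 := key 0 0 (by norm_num)
  simp only [pow_zero] at h0
  have hbase : a 1 = f 0 (a 0) ∧ a 2 = f 0 (a 0) ∧ a 3 = a 0 := by simpa using h0
  have hca : a 0 = c := by
    have h := hw0.symm.trans (hw 0)
    norm_num [List.range_succ] at h
    exact h.symm
  have hne0 : f 0 (a 0) ≠ a 0 := by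
    have := hne 0
    rw [hw0] at this
    rw [hca]
    simpa using this
  induction k using Nat.strong_induction_on with
  | _ k ih =>
    rcases Nat.eq_zero_or_pos k with rfl | hk
    · refine ⟨by simpa using hbase.2.2, ?_, ?_⟩
      · show a 2 = a 1
        rw [hbase.2.1, hbase.1]
      · show a 0 ≠ a 1
        rw [hbase.1]; exact fun h => hne0 h.symm
    · obtain ⟨m, hlow, hhigh⟩ : ∃ m, 4^(m+1) ≤ 4*k ∧ 4*k < 4^(m+2) := by
        have h1 : 1 ≤ Nat.log 4 (4*k) := by
          exact (Nat.le_log_iff_pow_le (by norm_num) (by omega)).mpr (by omega)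
        refine ⟨Nat.log 4 (4*k) - 1, ?_, ?_⟩
        · rw [show Nat.log 4 (4*k) - 1 + 1 = Nat.log 4 (4*k) by omega]
          exact Nat.pow_log_le_self 4 (by omega)
        · rw [show Nat.log 4 (4*k) - 1 + 2 = Nat.log 4 (4*k) + 1 by omega]
          exact Nat.lt_pow_succ_log_self (by norm_num) _
      have h41 : (4:ℕ)^(m+1) = 4*4^m := by ring
      have h42 : (4:ℕ)^(m+2) = 16*4^m := by ring
      have h4m : 0 < (4:ℕ)^m := pow_pos (by norm_num) m
      have hstep4 : ∃ k' < k, (∀ i < 4, a (4*k+i) = f (m+1) (a (4*k'+i))) ∨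
          (∀ i < 4, a (4*k+i) = a (4*k'+i)) := by
        rcases lt_or_ge (4*k) (2*4^(m+1)) with hcase | hcase
        · refine ⟨k - 4^m, by omega, Or.inl ?_⟩
          intro i hi
          have hj : 4*(k-4^m)+i < 4^(m+1) := by omega
          have := (key (m+1) (4*(k-4^m)+i) hj).1
          rwa [show 4^(m+1) + (4*(k-4^m)+i) = 4*k+i by omega] at this
        · rcases lt_or_ge (4*k) (3*4^(m+1)) with hcase2 | hcase2
          · refine ⟨k - 2*4^m, by omega, Or.inl ?_⟩
            intro i hi
            have hj : 4*(k-2*4^m)+i < 4^(m+1) := by omega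
            have := (key (m+1) (4*(k-2*4^m)+i) hj).2.1
            rwa [show 2*4^(m+1) + (4*(k-2*4^m)+i) = 4*k+i by omega] at this
          · refine ⟨k - 3*4^m, by omega, Or.inr ?_⟩
            intro i hi
            have hj : 4*(k-3*4^m)+i < 4^(m+1) := by omega
            have := (key (m+1) (4*(k-3*4^m)+i) hj).2.2
            rwa [show 3*4^(m+1) + (4*(k-3*4^m)+i) = 4*k+i by omega] at this
      obtain ⟨k', hk', hg⟩ := hstep4
      obtain ⟨ha1, ha2, ha3⟩ := ih k' hk'
      rcases hg with hg | hg
      · have hg0 : a (4*k) = f (m+1) (a (4*k'+0)) := by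
          rw [show 4*k = 4*k+0 by omega]; exact hg 0 (by norm_num)
        have hg1 := hg 1 (by norm_num)
        have hg2 := hg 2 (by norm_num)
        have hg3 := hg 3 (by norm_num)
        refine ⟨?_, ?_, ?_⟩
        · rw [hg3, hg0, show 4*k'+0 = 4*k' by omega, ha1]
        · rw [hg2, hg1, ha2]
        · rw [hg0, hg1, show 4*k'+0 = 4*k' by omega]
          exact fun h => ha3 ((f (m+1)).injective h)
      · have hg0 : a (4*k) = a (4*k'+0) := by
          rw [show 4*k = 4*k+0 by omega]; exact hg 0 (by norm_num)
        have hg1 := hg 1 (by norm_num)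
        have hg2 := hg 2 (by norm_num)
        have hg3 := hg 3 (by norm_num)
        refine ⟨?_, ?_, ?_⟩
        · rw [hg3, hg0, show 4*k'+0 = 4*k' by omega, ha1]
        · rw [hg2, hg1, ha2]
        · rw [hg0, hg1, show 4*k'+0 = 4*k' by omega]; exact ha3

theorem stmt2 {α : Type*} (a : ℕ → α) (hC : InC a) (x y : ℕ)
    (hpal : (factor a x y).Palindrome) (heven : Even y) (hy : 2 ≤ y) :
    (∃ z r : ℕ, (factor a (4 * z) (4 * r)).Palindrome ∧ EmbedCenter x y z r) ∨
    (x % 4 = 3 ∧ y % 4 = 2) := by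
  have B := blocks hC
  have sym := pal_sym hpal
  have hy2 : y % 2 = 0 := Nat.even_iff.mp heven
  -- the midpoint x + y/2 is even
  have hme : (x + y / 2) % 2 = 0 := by
    by_contra hodd
    have hm := sym (y / 2) (by omega)
    rcases (by omega : (x + y/2) % 4 = 1 ∨ (x + y/2) % 4 = 3) with h | h
    · obtain ⟨kk, hkk⟩ : ∃ kk, x + y/2 = 4*kk+1 := ⟨(x + y/2)/4, by omega⟩
      rw [hkk, show x + (y - 1 - y/2) = 4*kk by omega] at hm
      exact (B kk).2.2 hm.symm
    · obtain ⟨kk, hkk⟩ : ∃ kk, x + y/2 = 4*kk+3 := ⟨(x + y/2)/4, by omega⟩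
      rw [hkk, show x + (y - 1 - y/2) = 4*kk+2 by omega] at hm
      exact (B kk).2.2 ((B kk).1.symm.trans (hm.trans (B kk).2.1))
  rcases (by omega : x % 4 = 0 ∨ x % 4 = 1 ∨ x % 4 = 2 ∨ x % 4 = 3) with hx | hx | hx | hx
  · -- x ≡ 0 : the factor itself works
    have hy4 : y % 4 = 0 := by omega
    left
    refine ⟨x/4, y/4, ?_, ?_⟩
    · rw [show 4*(x/4) = x by omega, show 4*(y/4) = y by omega]
      exact hpal
    · unfold EmbedCenter; omega
  · -- x ≡ 1 : extend by one on each side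
    have hy4 : y % 4 = 2 := by omega
    obtain ⟨t, ht⟩ : ∃ t, x = 4*t+1 := ⟨x/4, by omega⟩
    obtain ⟨t', ht'⟩ : ∃ t', x + y = 4*t'+3 := ⟨(x+y)/4, by omega⟩
    have E0 : a (4*t) = a (4*t'+3) := by
      rcases eq_or_lt_of_le hy with hyy | hyy
      · rw [show t' = t by omega]
        exact (B t).1.symm
      · have s2 := sym 2 (by omega)
        rw [show x + 2 = 4*t+3 by omega, show x + (y-1-2) = 4*t' by omega] at s2
        exact ((B t).1.symm.trans s2).trans (B t').1.symm
    left
    refine ⟨t, (y+2)/4, ?_, ?_⟩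
    · rw [show 4*t = 4*t by rfl, show 4*((y+2)/4) = y+2 by omega]
      apply pal_of_sym
      intro j hj
      rcases (by omega : j = 0 ∨ (1 ≤ j ∧ j ≤ y) ∨ j = y+1) with rfl | ⟨hj1, hj2⟩ | rfl
      · rw [show 4*t+0 = 4*t by omega, show 4*t + (y+2-1-0) = 4*t'+3 by omega]
        exact E0
      · have s := sym (j-1) (by omega)
        rw [show x + (j-1) = 4*t+j by omega,
          show x + (y-1-(j-1)) = 4*t + (y+2-1-j) by omega] at s
        exact s
      · rw [show 4*t+(y+1) = 4*t'+3 by omega, show 4*t + (y+2-1-(y+1)) = 4*t by omega]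
        exact E0.symm
    · unfold EmbedCenter; omega
  · -- x ≡ 2 : extend by two on each side
    have hy4 : y % 4 = 0 := by omega
    obtain ⟨t, ht⟩ : ∃ t, x = 4*t+2 := ⟨x/4, by omega⟩
    obtain ⟨t', ht'⟩ : ∃ t', x + y = 4*t'+2 := ⟨(x+y)/4, by omega⟩
    have s0 := sym 0 (by omega)
    rw [show x + 0 = 4*t+2 by omega, show x + (y-1-0) = 4*t'+1 by omega] at s0
    have s1 := sym 1 (by omega)
    rw [show x + 1 = 4*t+3 by omega, show x + (y-1-1) = 4*t' by omega] at s1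
    have E1 : a (4*t+1) = a (4*t'+2) := ((B t).2.1.symm.trans s0).trans (B t').2.1.symm
    have E0 : a (4*t) = a (4*t'+3) := ((B t).1.symm.trans s1).trans (B t').1.symm
    left
    refine ⟨t, (y+4)/4, ?_, ?_⟩
    · rw [show 4*((y+4)/4) = y+4 by omega]
      apply pal_of_sym
      intro j hj
      rcases (by omega : j = 0 ∨ j = 1 ∨ (2 ≤ j ∧ j ≤ y+1) ∨ j = y+2 ∨ j = y+3) with
        rfl | rfl | ⟨hj1, hj2⟩ | rfl | rfl
      · rw [show 4*t+0 = 4*t by omega, show 4*t + (y+4-1-0) = 4*t'+3 by omega]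
        exact E0
      · rw [show 4*t + (y+4-1-1) = 4*t'+2 by omega]
        exact E1
      · have s := sym (j-2) (by omega)
        rw [show x + (j-2) = 4*t+j by omega,
          show x + (y-1-(j-2)) = 4*t + (y+4-1-j) by omega] at s
        exact s
      · rw [show 4*t+(y+2) = 4*t'+2 by omega, show 4*t + (y+4-1-(y+2)) = 4*t+1 by omega]
        exact E1.symm
      · rw [show 4*t+(y+3) = 4*t'+3 by omega, show 4*t + (y+4-1-(y+3)) = 4*t by omega]
        exact E0.symm
    · unfold EmbedCenter; omega
  · -- x ≡ 3
    right
    exact ⟨hx, by omega⟩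
end

section
/- Let a : ℕ → α be a sequence in the class 𝒞 and let w_a(0, s) be a prefix of a. Suppose w_a(0, s) = p_1 p_2 ⋯ p_r is an optimal palindromic decomposition (so r = P_a(s)) such that each p_i either has length 1 or, occurring at its position inside the prefix, is embedded into the center of a palindromic factor of the form w_a(4z, 4t). Then w_a(0, s) admits an optimal palindromic decomposition of at least one of the following forms, where each q_i is a palindrome whose length is divisible by 4, each t_i is a single letter, and each l_i is a palindrome of even length: (i) q_1⋯q_r, in which case s ≡ 0 (mod 4); (ii) q_1⋯q_{r−1} t_1, in which case s ≡ 1 (mod 4); (iii) q_1⋯q_{r−2} t_1 t_2, in which case s ≡ 2 (mod 4); (iv) q_1⋯q_{r−2} t_1 l_1, in which case s ≡ 3 (mod 4); (v) q_1⋯q_{r−3} t_1 t_2 l_1, in which case s ≡ 2 (mod 4). -/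
namespace StmtAux
variable {α : Type*}

variable {α : Type*}

lemma factor_length (a : ℕ → α) (x y : ℕ) : (factor a x y).length = y := by
  simp [factor]

lemma factor_zero (a : ℕ → α) (x : ℕ) : factor a x 0 = [] := by simp [factor]

lemma factor_one (a : ℕ → α) (x : ℕ) : factor a x 1 = [a x] := by
  simp [factor, List.range_succ]

lemma factor_append (a : ℕ → α) (x m n : ℕ) :
    factor a x m ++ factor a (x + m) n = factor a x (m + n) := by
  simp only [factor, List.range_add, List.map_append, List.map_map]
  congr 1
  apply List.map_congr_left
  intro i _
  simp [Function.comp]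
  congr 1
  omega

lemma palindrome_factor_iff (a : ℕ → α) (x y : ℕ) :
    (factor a x y).Palindrome ↔ ∀ i, i < y → a (x + i) = a (x + (y - 1 - i)) := by
  rw [List.Palindrome.iff_reverse_eq]
  constructor
  · intro h i hi
    have hb : i < (factor a x y).reverse.length := by
      simpa [factor] using hi
    have := (List.getElem_of_eq h (by simpa [factor] using hi)).symm
    rw [List.getElem_reverse] at this
    simp only [factor, List.getElem_map, List.getElem_range, List.length_map,
      List.length_range] at this
    exact this
  · intro h
    apply List.ext_getElem
    · simp
    · intro i h1 h2
      rw [List.getElem_reverse]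
      simp only [factor, List.getElem_map, List.getElem_range, List.length_map,
        List.length_range]
      have hi : i < y := by simpa [factor] using h2
      exact (h i hi).symm

lemma factor_one_palindrome (a : ℕ → α) (x : ℕ) : (factor a x 1).Palindrome := by
  rw [factor_one]; exact List.Palindrome.singleton _

lemma centered_sub (a : ℕ → α) {L n u v : ℕ} (h : (factor a L n).Palindrome)
    (h1 : L ≤ u) (h2 : v ≤ L + n) (h3 : u + v = 2*L + n) (h4 : u ≤ v) :
    (factor a u (v - u)).Palindrome := by
  rw [palindrome_factor_iff] at h ⊢
  intro i hi
  have hb : u + i - L < n := by omega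
  have key := h (u + i - L) hb
  have e1 : L + (u + i - L) = u + i := by omega
  have e2 : L + (n - 1 - (u + i - L)) = u + (v - u - 1 - i) := by omega
  rw [e1, e2] at key
  exact key

lemma quarters {a : ℕ → α} (c : α) (f : ℕ → α ≃ α) (w : ℕ → List α)
    (hrec : ∀ n, w (n + 1) = w n ++ (w n).map (f n) ++ (w n).map (f n) ++ w n)
    (hw : ∀ n, w n = (List.range (4 ^ n)).map a) :
    ∀ n t, t < 4^n →
      a (4^n + t) = f n (a t) ∧ a (2*4^n + t) = f n (a t) ∧ a (3*4^n + t) = a t := by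
  intro n t ht
  set N := 4^n with hN
  have hNpos : 0 < N := pow_pos (by norm_num) n
  set A : List α := (List.range N).map a with hA
  set B : List α := A.map (f n) with hB
  have lenA : A.length = N := by simp [hA]
  have lenB : B.length = N := by simp [hB, hA]
  have hp : 4^(n+1) = 4 * N := by rw [pow_succ]; ring
  set l : List α := (List.range (4*N)).map a with hl
  have e2 : l = A ++ (B ++ (B ++ A)) := by
    have := hrec n
    rw [hw (n+1), hw n, hp] at this
    rw [hl, this]
    simp [hA, hB, hN, List.map_map, List.append_assoc]
  have lenl : l.length = 4*N := by simp [hl]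
  have d1 : l.drop N = B ++ (B ++ A) := by
    rw [e2, ← lenA, List.drop_left]
  have d2 : l.drop (2*N) = B ++ A := by
    have : l.drop (2*N) = (l.drop N).drop N := by
      rw [List.drop_drop]; congr 1; omega
    rw [this, d1, ← lenB, List.drop_left]
  have d3 : l.drop (3*N) = A := by
    have : l.drop (3*N) = (l.drop (2*N)).drop N := by
      rw [List.drop_drop]; congr 1; omega
    rw [this, d2, ← lenB, List.drop_left]
  have lget : ∀ p (hp : p < 4*N), l[p]'(by omega) = a p := by
    intro p hp
    simp [hl]
  have Bget : ∀ (hb : t < B.length), B[t]'hb = f n (a t) := by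
    intro hb
    simp [hB, hA]
  have Aget : ∀ (hb : t < A.length), A[t]'hb = a t := by
    intro hb
    simp [hA]
  have hdlen : ∀ m, m ≤ 3*N → (l.drop m).length = 4*N - m := by
    intro m hm; simp [lenl]
  refine ⟨?_, ?_, ?_⟩
  · have hb1 : t < (B ++ (B ++ A)).length := by
      simp [lenA, lenB]; omega
    have hb0 : t < (l.drop N).length := by rw [hdlen N (by omega)]; omega
    have h2 : (l.drop N)[t]'hb0 = (B ++ (B ++ A))[t]'hb1 := List.getElem_of_eq d1 hb0
    have h3 : (B ++ (B ++ A))[t]'hb1 = B[t]'(by omega) :=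
      List.getElem_append_left (by omega)
    have h4 : (l.drop N)[t]'hb0 = a (N + t) := by
      rw [List.getElem_drop]; exact lget (N + t) (by omega)
    rw [← h4, h2, h3, Bget]
  · have hb1 : t < (B ++ A).length := by simp [lenA, lenB]; omega
    have hb0 : t < (l.drop (2*N)).length := by rw [hdlen (2*N) (by omega)]; omega
    have h2 : (l.drop (2*N))[t]'hb0 = (B ++ A)[t]'hb1 := List.getElem_of_eq d2 hb0
    have h3 : (B ++ A)[t]'hb1 = B[t]'(by omega) :=
      List.getElem_append_left (by omega)
    have h4 : (l.drop (2*N))[t]'hb0 = a (2*N + t) := by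
      rw [List.getElem_drop]; exact lget (2*N + t) (by omega)
    rw [← h4, h2, h3, Bget]
  · have hb0 : t < (l.drop (3*N)).length := by rw [hdlen (3*N) (by omega)]; omega
    have h2 : (l.drop (3*N))[t]'hb0 = A[t]'(by omega) := List.getElem_of_eq d3 hb0
    have h4 : (l.drop (3*N))[t]'hb0 = a (3*N + t) := by
      rw [List.getElem_drop]; exact lget (3*N + t) (by omega)
    rw [← h4, h2, Aget]

lemma blk_of_InC {a : ℕ → α} (hC : InC a) :
    ∀ k : ℕ, a (4*k) = a (4*k+3) ∧ a (4*k+1) = a (4*k+2) := by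
  obtain ⟨c, f, w, h0, hrec, -, hw⟩ := hC
  have key := quarters c f w hrec hw
  have B : ∀ n k, 4*k + 3 < 4^n → (a (4*k) = a (4*k+3) ∧ a (4*k+1) = a (4*k+2)) := by
    intro n
    induction n with
    | zero => intro k hk; simp at hk
    | succ n ih =>
      intro k hk
      rcases n with _ | m
      · have hk0 : k = 0 := by omega
        subst hk0
        obtain ⟨q1, q2, q3⟩ := key 0 0 (by norm_num)
        norm_num at q1 q2 q3
        constructor
        · simpa using q3.symm
        · simp only [show 4*0+1 = 1 by norm_num, show 4*0+2 = 2 by norm_num]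
          rw [q1, q2]
      · have hpow : (4:ℕ)^(m+1+1) = 4*4^(m+1) := by rw [pow_succ]; ring
        rw [hpow] at hk
        have keyN := key (m+1)
        have hNpos : 0 < (4:ℕ)^(m+1) := pow_pos (by norm_num) (m+1)
        have h4N : 4 ∣ (4:ℕ)^(m+1) := ⟨4^m, by rw [pow_succ]; ring⟩
        generalize hNe : (4:ℕ)^(m+1) = N at hk ih keyN hNpos h4N
        obtain ⟨u, hu⟩ := h4N
        by_cases c1 : 4*k + 3 < N
        · exact ih k c1
        · by_cases c2 : 4*k + 3 < 2*N
          · have hge : N ≤ 4*k := by omega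
            obtain ⟨k', hk'⟩ : ∃ k', 4*k = N + 4*k' := ⟨k - u, by omega⟩
            have h3 : 4*k' + 3 < N := by omega
            obtain ⟨e0, e1⟩ := ih k' h3
            constructor
            · have A0 := (keyN (4*k') (by omega)).1
              have A3 := (keyN (4*k'+3) (by omega)).1
              have : a (N + 4*k') = a (N + (4*k'+3)) := by rw [A0, A3, e0]
              convert this using 2 <;> omega
            · have A1 := (keyN (4*k'+1) (by omega)).1
              have A2 := (keyN (4*k'+2) (by omega)).1
              have : a (N + (4*k'+1)) = a (N + (4*k'+2)) := by rw [A1, A2, e1]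
              convert this using 2 <;> omega
          · by_cases c3 : 4*k + 3 < 3*N
            · have hge : 2*N ≤ 4*k := by omega
              obtain ⟨k', hk'⟩ : ∃ k', 4*k = 2*N + 4*k' := ⟨k - 2*u, by omega⟩
              have h3 : 4*k' + 3 < N := by omega
              obtain ⟨e0, e1⟩ := ih k' h3
              constructor
              · have A0 := (keyN (4*k') (by omega)).2.1
                have A3 := (keyN (4*k'+3) (by omega)).2.1
                have : a (2*N + 4*k') = a (2*N + (4*k'+3)) := by rw [A0, A3, e0]
                convert this using 2 <;> omega
              · have A1 := (keyN (4*k'+1) (by omega)).2.1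
                have A2 := (keyN (4*k'+2) (by omega)).2.1
                have : a (2*N + (4*k'+1)) = a (2*N + (4*k'+2)) := by rw [A1, A2, e1]
                convert this using 2 <;> omega
            · have hge : 3*N ≤ 4*k := by omega
              obtain ⟨k', hk'⟩ : ∃ k', 4*k = 3*N + 4*k' := ⟨k - 3*u, by omega⟩
              have h3 : 4*k' + 3 < N := by omega
              obtain ⟨e0, e1⟩ := ih k' h3
              constructor
              · have A0 := (keyN (4*k') (by omega)).2.2
                have A3 := (keyN (4*k'+3) (by omega)).2.2
                have : a (3*N + 4*k') = a (3*N + (4*k'+3)) := by rw [A0, A3, e0]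
                convert this using 2 <;> omega
              · have A1 := (keyN (4*k'+1) (by omega)).2.2
                have A2 := (keyN (4*k'+2) (by omega)).2.2
                have : a (3*N + (4*k'+1)) = a (3*N + (4*k'+2)) := by rw [A1, A2, e1]
                convert this using 2 <;> omega
  intro k
  refine B (4*k+4) k ?_
  have : 4*k + 4 < 4^(4*k+4) := Nat.lt_pow_self (by norm_num)
  omega


lemma pal4of {a : ℕ → α} (blk : ∀ k : ℕ, a (4*k) = a (4*k+3) ∧ a (4*k+1) = a (4*k+2))
    {b : ℕ} (hb : b % 4 = 0) : (factor a b 4).Palindrome := by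
  obtain ⟨m, rfl⟩ : ∃ m, b = 4*m := ⟨b/4, by omega⟩
  rw [palindrome_factor_iff]
  intro i hi
  interval_cases i
  · convert (blk m).1 using 2 <;> omega
  · convert (blk m).2 using 2 <;> omega
  · convert (blk m).2.symm using 2 <;> omega
  · convert (blk m).1.symm using 2 <;> omega

lemma pal2of {a : ℕ → α} (blk : ∀ k : ℕ, a (4*k) = a (4*k+3) ∧ a (4*k+1) = a (4*k+2))
    {b : ℕ} (hb : b % 4 = 1) : (factor a b 2).Palindrome := by
  obtain ⟨m, rfl⟩ : ∃ m, b = 4*m+1 := ⟨b/4, by omega⟩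
  rw [palindrome_factor_iff]
  intro i hi
  interval_cases i
  · convert (blk m).2 using 2 <;> omega
  · convert (blk m).2.symm using 2 <;> omega

/-- A piece of the decomposition: either a single letter, or a palindrome
embedded into the center of a 4-aligned palindromic factor. -/
def PieceAt (a : ℕ → α) (x y : ℕ) : Prop :=
  y = 1 ∨ (∃ LB RB : ℕ, LB % 4 = 0 ∧ RB % 4 = 0 ∧ LB ≤ x ∧ x + y ≤ RB ∧
    LB + RB = 2*x + y ∧
    ∀ u v, LB ≤ u → v ≤ RB → u + v = LB + RB → u ≤ v → (factor a u (v - u)).Palindrome)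

/-- All pieces of a list of lengths, starting at position `x`, are good pieces. -/
def GoodP (a : ℕ → α) : ℕ → List ℕ → Prop
  | _, [] => True
  | x, y :: t => PieceAt a x y ∧ GoodP a (x + y) t

/-- The shape of the tail of the constructed decomposition. -/
def TailShape (s : ℕ) (Q : List (List α)) : Prop :=
  ∃ Q' tl : List (List α), Q = Q' ++ tl ∧ (∀ q ∈ Q', 4 ∣ q.length) ∧
    ((tl = [] ∧ s % 4 = 0) ∨
     (∃ t1, tl = [t1] ∧ t1.length = 1 ∧ s % 4 = 1) ∨
     (∃ t1 t2, tl = [t1, t2] ∧ t1.length = 1 ∧ t2.length = 1 ∧ s % 4 = 2) ∨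
     (∃ t1 l1, tl = [t1, l1] ∧ t1.length = 1 ∧ 2 ∣ l1.length ∧ s % 4 = 3) ∨
     (∃ t1 t2 l1, tl = [t1, t2, l1] ∧ t1.length = 1 ∧ t2.length = 1 ∧
        2 ∣ l1.length ∧ s % 4 = 2))

lemma tailShape_cons {s : ℕ} {Q : List (List α)} {q : List α}
    (hq : 4 ∣ q.length) (h : TailShape s Q) : TailShape s (q :: Q) := by
  obtain ⟨Q', tl, rfl, h4, hC⟩ := h
  refine ⟨q :: Q', tl, rfl, ?_, hC⟩
  intro p hp
  rw [List.mem_cons] at hp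
  rcases hp with rfl | hp
  · exact hq
  · exact h4 _ hp


lemma flatten_build (a : ℕ → α) {s : ℕ} (b n w : ℕ) (hw : b + n = w) (hws : w ≤ s)
    {Q : List (List α)} (hQ : Q.flatten = factor a w (s - w)) :
    (factor a b n :: Q).flatten = factor a b (s - b) := by
  rw [List.flatten_cons, hQ]
  have happ := factor_append a b n (s - w)
  rw [hw] at happ
  rw [happ, show n + (s - w) = s - b from by omega]

lemma flatten_last (a : ℕ → α) (w s : ℕ) :
    [factor a w (s - w)].flatten = factor a w (s - w) := by simp

set_option maxHeartbeats 2000000 in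
lemma main_lemma (a : ℕ → α)
    (blk : ∀ k : ℕ, a (4*k) = a (4*k+3) ∧ a (4*k+1) = a (4*k+2)) (s : ℕ) :
    ∀ (ys : List ℕ) (x b : ℕ) (d : ℤ),
      GoodP a x ys → x + ys.sum = s → (b : ℤ) = x + d → -3 ≤ d → d ≤ 3 →
      b % 4 = 0 → b ≤ s →
      ∃ Q : List (List α), Q.flatten = factor a b (s - b) ∧
        Q.length ≤ ys.length + min d.natAbs 2 ∧
        (∀ q ∈ Q, q.Palindrome) ∧ TailShape s Q := by
  intro ys
  induction ys with
  | nil =>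
    intro x b d _ hsum hbd hd1 hd2 hb4 hbs
    simp only [List.sum_nil, List.length_nil] at hsum ⊢
    have hsx : s = x := by omega
    have hd0 : d ≤ 0 := by omega
    have hcase : d = 0 ∨ d = -1 ∨ d = -2 ∨ d = -3 := by omega
    rcases hcase with h | h | h | h <;> subst h
    · -- exact fit
      refine ⟨[], ?_, by simp, by simp, [], [], rfl, by simp, Or.inl ⟨rfl, by omega⟩⟩
      simp [show s - b = 0 from by omega, factor]
    · -- one letter
      have hb1 : b + 1 = s := by omega
      refine ⟨[factor a b (s - b)], by simp, by simp only [List.length_cons, List.length_nil]; omega, ?_, [], _, rfl, by simp, ?_⟩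
      · intro q hq
        rw [List.mem_cons] at hq
        rcases hq with rfl | h
        · rw [show s - b = 1 from by omega]
          exact factor_one_palindrome a b
        · simp at h
      · refine Or.inr (Or.inl ⟨factor a b (s - b), rfl, ?_, by omega⟩)
        simp only [factor_length]; omega
    · -- two letters
      have hb2 : b + 2 = s := by omega
      refine ⟨[factor a b 1, factor a (b+1) (s - (b+1))],
        flatten_build a b 1 (b+1) rfl (by omega) (flatten_last a (b+1) s),
        by simp only [List.length_cons, List.length_nil]; omega, ?_, [], _, rfl,
        by simp, ?_⟩
      · intro q hq
        rw [List.mem_cons] at hq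
        rcases hq with rfl | hq
        · exact factor_one_palindrome a b
        · rw [List.mem_cons] at hq
          rcases hq with rfl | hq
          · rw [show s - (b+1) = 1 from by omega]
            exact factor_one_palindrome a (b+1)
          · simp at hq
      · refine Or.inr (Or.inr (Or.inl ⟨factor a b 1, factor a (b+1) (s - (b+1)), rfl,
          by simp only [factor_length], by simp only [factor_length]; omega, by omega⟩))
    · -- letter + length-2 palindrome
      have hb3 : b + 3 = s := by omega
      refine ⟨[factor a b 1, factor a (b+1) (s - (b+1))],
        flatten_build a b 1 (b+1) rfl (by omega) (flatten_last a (b+1) s),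
        by simp only [List.length_cons, List.length_nil]; omega, ?_, [], _, rfl,
        by simp, ?_⟩
      · intro q hq
        rw [List.mem_cons] at hq
        rcases hq with rfl | hq
        · exact factor_one_palindrome a b
        · rw [List.mem_cons] at hq
          rcases hq with rfl | hq
          · have h2 := pal2of blk (show (b+1) % 4 = 1 from by omega)
            convert h2 using 2
            omega
          · simp at hq
      · refine Or.inr (Or.inr (Or.inr (Or.inl ⟨factor a b 1, factor a (b+1) (s - (b+1)),
          rfl, by simp only [factor_length], by simp only [factor_length]; omega, by omega⟩)))
  | cons y rest ih =>
    intro x b d hg hsum hbd hd1 hd2 hb4 hbs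
    obtain ⟨hpiece, hgood⟩ : PieceAt a x y ∧ GoodP a (x + y) rest := hg
    have hsum' : (x + y) + rest.sum = s := by
      simp only [List.sum_cons] at hsum; omega
    simp only [List.length_cons]
    rcases hpiece with hy1 | ⟨LB, RB, hLB4, hRB4, hLBx, hxyRB, hsumLR, hcent⟩
    · -- LETTER piece
      subst hy1
      by_cases hd3 : d = -3
      · -- emit a 4-block absorbing the letter
        subst hd3
        obtain ⟨Q, hQ1, hQ2, hQ3, hQ4⟩ := ih (x+1) (b+4) 0 hgood (by omega) (by omega)
          (by norm_num) (by norm_num) (by omega) (by omega)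
        refine ⟨factor a b 4 :: Q, ?_, ?_, ?_, ?_⟩
        · exact flatten_build a b 4 (b+4) rfl (by omega) hQ1
        · simp only [List.length_cons]
          omega
        · intro q hq
          rw [List.mem_cons] at hq
          rcases hq with rfl | hq
          · exact pal4of blk hb4
          · exact hQ3 q hq
        · exact tailShape_cons (by simp only [factor_length]; omega) hQ4
      · -- skip the letter (it will be covered later or was covered before)
        obtain ⟨Q, hQ1, hQ2, hQ3, hQ4⟩ := ih (x+1) b (d-1) hgood (by omega) (by omega)
          (by omega) (by omega) hb4 hbs
        exact ⟨Q, hQ1, by omega, hQ3, hQ4⟩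
    · -- EMBEDDED piece
      have h2xy4 : (2*x + y) % 4 = 0 := by omega
      have hy2 : 2 ∣ y := by omega
      by_cases hA : 2*b ≤ 2*x + y
      · by_cases hB : 2*x + y - b ≤ s
        · -- reflect the piece w.r.t. its center
          obtain ⟨Q, hQ1, hQ2, hQ3, hQ4⟩ := ih (x+y) (2*x + y - b) (-d) hgood (by omega)
            (by omega) (by omega) (by omega) (by omega) (by omega)
          refine ⟨factor a b ((2*x + y - b) - b) :: Q,
            flatten_build a b ((2*x + y - b) - b) (2*x + y - b) (by omega) (by omega) hQ1,
            ?_, ?_, ?_⟩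
          · simp only [List.length_cons]; omega
          · intro q hq
            rw [List.mem_cons] at hq
            rcases hq with rfl | hq
            · exact hcent b (2*x + y - b) (by omega) (by omega) (by omega) (by omega)
            · exact hQ3 q hq
          · exact tailShape_cons (by simp only [factor_length]; omega) hQ4
        · -- FINISH: the reflected piece would overrun the end of the word
          push_neg at hB
          have hxys : x + y ≤ s := by omega
          have hd : d = -1 ∨ d = -2 ∨ d = -3 := by omega
          rcases hd with h | h | h <;> subst h
          · -- d = -1 : s = x + y ; tail = letter + even palindrome
            have hs : s = x + y := by omega
            refine ⟨[factor a b 1, factor a (b+1) (s - (b+1))],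
              flatten_build a b 1 (b+1) rfl (by omega) (flatten_last a (b+1) s),
              by simp only [List.length_cons, List.length_nil]; omega, ?_, [], _, rfl,
              by simp, ?_⟩
            · intro q hq
              rw [List.mem_cons] at hq
              rcases hq with rfl | hq
              · exact factor_one_palindrome a b
              · rw [List.mem_cons] at hq
                rcases hq with rfl | hq
                · exact hcent (b+1) s (by omega) (by omega) (by omega) (by omega)
                · simp at hq
            · refine Or.inr (Or.inr (Or.inr (Or.inl ⟨factor a b 1,
                factor a (b+1) (s - (b+1)), rfl, by simp only [factor_length],
                by simp only [factor_length]; omega, by omega⟩)))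
          · -- d = -2
            have hs : s = x + y ∨ s = x + y + 1 := by omega
            rcases hs with hs | hs
            · -- two letters + the piece itself
              refine ⟨[factor a b 1, factor a (b+1) 1, factor a (b+2) (s - (b+2))],
                flatten_build a b 1 (b+1) rfl (by omega) (flatten_build a (b+1) 1 (b+2)
                  (by omega) (by omega) (flatten_last a (b+2) s)),
                by simp only [List.length_cons, List.length_nil]; omega, ?_, [], _, rfl, by simp, ?_⟩
              · intro q hq
                rw [List.mem_cons] at hq
                rcases hq with rfl | hq
                · exact factor_one_palindrome a b
                · rw [List.mem_cons] at hq
                  rcases hq with rfl | hq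
                  · exact factor_one_palindrome a (b+1)
                  · rw [List.mem_cons] at hq
                    rcases hq with rfl | hq
                    · exact hcent (b+2) s (by omega) (by omega) (by omega) (by omega)
                    · simp at hq
              · refine Or.inr (Or.inr (Or.inr (Or.inr ⟨factor a b 1, factor a (b+1) 1,
                  factor a (b+2) (s - (b+2)), rfl, by simp only [factor_length],
                  by simp only [factor_length], by simp only [factor_length]; omega, by omega⟩)))
            · -- letter + enlarged piece
              refine ⟨[factor a b 1, factor a (b+1) (s - (b+1))],
                flatten_build a b 1 (b+1) rfl (by omega) (flatten_last a (b+1) s),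
                by simp only [List.length_cons, List.length_nil]; omega, ?_, [], _, rfl,
                by simp, ?_⟩
              · intro q hq
                rw [List.mem_cons] at hq
                rcases hq with rfl | hq
                · exact factor_one_palindrome a b
                · rw [List.mem_cons] at hq
                  rcases hq with rfl | hq
                  · exact hcent (b+1) s (by omega) (by omega) (by omega) (by omega)
                  · simp at hq
              · refine Or.inr (Or.inr (Or.inr (Or.inl ⟨factor a b 1,
                  factor a (b+1) (s - (b+1)), rfl, by simp only [factor_length],
                  by simp only [factor_length]; omega, by omega⟩)))
          · -- d = -3
            have hy4 : y % 4 = 2 := by omega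
            have hs : s = x + y ∨ s = x + y + 1 ∨ s = x + y + 2 := by omega
            rcases hs with hs | hs | hs
            · -- block + shrunk core + letter
              refine ⟨[factor a b 4, factor a (b+4) ((s-1) - (b+4)),
                factor a (s-1) (s - (s-1))],
                flatten_build a b 4 (b+4) rfl (by omega) (flatten_build a (b+4)
                  ((s-1) - (b+4)) (s-1) (by omega) (by omega) (flatten_last a (s-1) s)),
                by simp only [List.length_cons, List.length_nil]; omega, ?_, ?_⟩
              · intro q hq
                rw [List.mem_cons] at hq
                rcases hq with rfl | hq
                · exact pal4of blk hb4
                · rw [List.mem_cons] at hq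
                  rcases hq with rfl | hq
                  · exact hcent (b+4) (s-1) (by omega) (by omega) (by omega) (by omega)
                  · rw [List.mem_cons] at hq
                    rcases hq with rfl | hq
                    · have h2 := factor_one_palindrome a (s-1)
                      convert h2 using 2
                      omega
                    · simp at hq
              · refine ⟨[factor a b 4, factor a (b+4) ((s-1) - (b+4))],
                  [factor a (s-1) (s - (s-1))],
                  rfl, ?_, Or.inr (Or.inl ⟨factor a (s-1) (s - (s-1)), rfl,
                  by simp only [factor_length]; omega, by omega⟩)⟩
                intro q hq
                rw [List.mem_cons] at hq
                rcases hq with rfl | hq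
                · simp only [factor_length]; omega
                · rw [List.mem_cons] at hq
                  rcases hq with rfl | hq
                  · simp only [factor_length]; omega
                  · simp at hq
            · -- two letters + enlarged piece
              refine ⟨[factor a b 1, factor a (b+1) 1, factor a (b+2) (s - (b+2))],
                flatten_build a b 1 (b+1) rfl (by omega) (flatten_build a (b+1) 1 (b+2)
                  (by omega) (by omega) (flatten_last a (b+2) s)),
                by simp only [List.length_cons, List.length_nil]; omega, ?_, [], _, rfl, by simp, ?_⟩
              · intro q hq
                rw [List.mem_cons] at hq
                rcases hq with rfl | hq
                · exact factor_one_palindrome a b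
                · rw [List.mem_cons] at hq
                  rcases hq with rfl | hq
                  · exact factor_one_palindrome a (b+1)
                  · rw [List.mem_cons] at hq
                    rcases hq with rfl | hq
                    · exact hcent (b+2) s (by omega) (by omega) (by omega) (by omega)
                    · simp at hq
              · refine Or.inr (Or.inr (Or.inr (Or.inr ⟨factor a b 1, factor a (b+1) 1,
                  factor a (b+2) (s - (b+2)), rfl, by simp only [factor_length],
                  by simp only [factor_length], by simp only [factor_length]; omega, by omega⟩)))
            · -- letter + doubly enlarged piece
              refine ⟨[factor a b 1, factor a (b+1) (s - (b+1))],
                flatten_build a b 1 (b+1) rfl (by omega) (flatten_last a (b+1) s),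
                by simp only [List.length_cons, List.length_nil]; omega, ?_, [], _, rfl,
                by simp, ?_⟩
              · intro q hq
                rw [List.mem_cons] at hq
                rcases hq with rfl | hq
                · exact factor_one_palindrome a b
                · rw [List.mem_cons] at hq
                  rcases hq with rfl | hq
                  · exact hcent (b+1) s (by omega) (by omega) (by omega) (by omega)
                  · simp at hq
              · refine Or.inr (Or.inr (Or.inr (Or.inl ⟨factor a b 1,
                  factor a (b+1) (s - (b+1)), rfl, by simp only [factor_length],
                  by simp only [factor_length]; omega, by omega⟩)))
      · -- skip the (short) embedded piece
        push_neg at hA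
        obtain ⟨Q, hQ1, hQ2, hQ3, hQ4⟩ := ih (x+y) b (d - y) hgood (by omega) (by omega)
          (by omega) (by omega) hb4 hbs
        exact ⟨Q, hQ1, by omega, hQ3, hQ4⟩


lemma pieceAt_of_shape {a : ℕ → α} {x y z t : ℕ}
    (hpal : (factor a (4*z) (4*t)).Palindrome) (hemb : EmbedCenter x y z t) :
    PieceAt a x y := by
  obtain ⟨h1, h2, h3⟩ := hemb
  refine Or.inr ⟨4*z, 4*z + 4*t, by omega, by omega, h1, h2, by omega, ?_⟩
  intro u v hu hv hsum huv
  exact centered_sub a hpal hu (by omega) (by omega) huv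

lemma toGood (a : ℕ → α) :
    ∀ (l : List (List α)) (x : ℕ),
      (∀ i (hi : i < l.length), (l.get ⟨i, hi⟩).length = 1 ∨
        ∃ z t : ℕ, (factor a (4*z) (4*t)).Palindrome ∧
          EmbedCenter (x + ((l.take i).map List.length).sum) (l.get ⟨i, hi⟩).length z t) →
      GoodP a x (l.map List.length) := by
  intro l
  induction l with
  | nil => intro x _; trivial
  | cons p tl ih =>
    intro x H
    rw [List.map_cons]
    refine ⟨?_, ?_⟩
    · rcases H 0 (by simp) with h | ⟨z, t, hp, he⟩
      · exact Or.inl (by simpa using h)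
      · exact pieceAt_of_shape hp (by simpa using he)
    · apply ih (x + p.length)
      intro i hi
      rcases H (i+1) (by simpa using hi) with h | ⟨z, t, hp, he⟩
      · exact Or.inl (by simpa using h)
      · refine Or.inr ⟨z, t, hp, ?_⟩
        have he2 : EmbedCenter (x + (((p :: tl).take (i+1)).map List.length).sum)
            ((p :: tl).get ⟨i+1, by simpa using hi⟩).length z t := he
        simp only [List.take_succ_cons, List.map_cons, List.sum_cons,
          List.get_cons_succ] at he2
        have e : x + (p.length + ((tl.take i).map List.length).sum)
            = x + p.length + ((tl.take i).map List.length).sum := by omega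
        rw [e] at he2
        exact he2

lemma flatten_replicate_nil (n : ℕ) :
    (List.replicate n ([] : List α)).flatten = [] := by
  induction n with
  | zero => simp
  | succ m ihm => simp [List.replicate_succ, ihm]


end StmtAux

theorem stmt3 {α : Type*} (a : ℕ → α) (hC : InC a) (s : ℕ)
    (ps : List (List α)) (r : ℕ)
    (hjoin : ps.flatten = prefixWord a s)
    (hlen : ps.length = r)
    (hopt : r = P a s)
    (hpal : ∀ p ∈ ps, p.Palindrome)
    (hshape : ∀ i (hi : i < ps.length),
      (ps.get ⟨i, hi⟩).length = 1 ∨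
      ∃ z t : ℕ, (factor a (4 * z) (4 * t)).Palindrome ∧
        EmbedCenter (((ps.take i).map List.length).sum) (ps.get ⟨i, hi⟩).length z t) :
    ∃ qs : List (List α),
      qs.flatten = prefixWord a s ∧ qs.length = r ∧ (∀ q ∈ qs, q.Palindrome) ∧
      (((∀ q ∈ qs, 4 ∣ q.length) ∧ s % 4 = 0) ∨
       (∃ qs' t₁, qs = qs' ++ [t₁] ∧ (∀ q ∈ qs', 4 ∣ q.length) ∧
          t₁.length = 1 ∧ s % 4 = 1) ∨
       (∃ qs' t₁ t₂, qs = qs' ++ [t₁, t₂] ∧ (∀ q ∈ qs', 4 ∣ q.length) ∧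
          t₁.length = 1 ∧ t₂.length = 1 ∧ s % 4 = 2) ∨
       (∃ qs' t₁ l₁, qs = qs' ++ [t₁, l₁] ∧ (∀ q ∈ qs', 4 ∣ q.length) ∧
          t₁.length = 1 ∧ 2 ∣ l₁.length ∧ s % 4 = 3) ∨
       (∃ qs' t₁ t₂ l₁, qs = qs' ++ [t₁, t₂, l₁] ∧ (∀ q ∈ qs', 4 ∣ q.length) ∧
          t₁.length = 1 ∧ t₂.length = 1 ∧ 2 ∣ l₁.length ∧ s % 4 = 2)) := by
  classical
  have blk := StmtAux.blk_of_InC hC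
  have hs : (ps.map List.length).sum = s := by
    have hlen2 := congrArg List.length hjoin
    rwa [List.length_flatten, prefixWord, StmtAux.factor_length] at hlen2
  have hgood : StmtAux.GoodP a 0 (ps.map List.length) := by
    apply StmtAux.toGood
    intro i hi
    rcases hshape i hi with h | ⟨z, t, hp, he⟩
    · exact Or.inl h
    · exact Or.inr ⟨z, t, hp, by simpa using he⟩
  obtain ⟨Q, hQ1, hQ2, hQ3, hQ4⟩ := StmtAux.main_lemma a blk s (ps.map List.length) 0 0 0
    hgood (by simpa using hs) (by norm_num) (by norm_num) (by norm_num) (by norm_num)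
    (by omega)
  have hQr : Q.length ≤ r := by
    have h1 : (ps.map List.length).length = r := by simp [hlen]
    simp only [h1, Int.natAbs_zero, Nat.zero_min, Nat.add_zero] at hQ2
    omega
  set qs : List (List α) := List.replicate (r - Q.length) [] ++ Q with hqs
  have hflat : qs.flatten = prefixWord a s := by
    rw [hqs, List.flatten_append, StmtAux.flatten_replicate_nil, List.nil_append, hQ1]
    rw [prefixWord]
    congr 1
  have hqlen : qs.length = r := by
    rw [hqs, List.length_append, List.length_replicate]
    omega
  have hpal' : ∀ q ∈ qs, q.Palindrome := by
    intro q hq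
    rw [hqs, List.mem_append] at hq
    rcases hq with hq | hq
    · rw [List.eq_of_mem_replicate hq]; exact List.Palindrome.nil
    · exact hQ3 q hq
  obtain ⟨Q', tl, hsplit, h4, hC5⟩ := hQ4
  refine ⟨qs, hflat, hqlen, hpal', ?_⟩
  have hmemrep : ∀ q ∈ List.replicate (r - Q.length) ([] : List α) ++ Q', 4 ∣ q.length := by
    intro q hq
    rw [List.mem_append] at hq
    rcases hq with hq | hq
    · rw [List.eq_of_mem_replicate hq]; simp
    · exact h4 q hq
  have hqs2 : qs = (List.replicate (r - Q.length) [] ++ Q') ++ tl := by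
    rw [hqs, hsplit, List.append_assoc]
  rcases hC5 with ⟨h0, hm⟩ | ⟨t1, h0, hl, hm⟩ | ⟨t1, t2, h0, hl1, hl2, hm⟩ |
    ⟨t1, l1, h0, hl1, hl2, hm⟩ | ⟨t1, t2, l1, h0, hl1, hl2, hl3, hm⟩
  · refine Or.inl ⟨?_, hm⟩
    intro q hq
    rw [hqs2, h0, List.append_nil] at hq
    exact hmemrep q hq
  · exact Or.inr (Or.inl ⟨_, t1, by rw [hqs2, h0], hmemrep, hl, hm⟩)
  · exact Or.inr (Or.inr (Or.inl ⟨_, t1, t2, by rw [hqs2, h0], hmemrep, hl1, hl2, hm⟩))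
  · exact Or.inr (Or.inr (Or.inr (Or.inl ⟨_, t1, l1, by rw [hqs2, h0], hmemrep, hl1, hl2,
      hm⟩)))
  · exact Or.inr (Or.inr (Or.inr (Or.inr ⟨_, t1, t2, l1, by rw [hqs2, h0], hmemrep, hl1,
      hl2, hl3, hm⟩)))
end

section
/- Let a : ℕ → α be a sequence in the class 𝒞. Then every prefix w_a(0, k) of a admits an optimal palindromic decomposition w_a(0, k) = p_1 p_2 ⋯ p_s (with s = P_a(k)) such that no p_i has length 3 and, furthermore, every p_i of even length, occurring at its position inside the prefix, is embedded into the center of a palindromic factor of the form w_a(4z, 4r). -/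
namespace TM4

variable {α : Type*} (a : ℕ → α)

@[simp] lemma factor_length (x y : ℕ) : (factor a x y).length = y := by simp [factor]

@[simp] lemma factor_getElem (x y i : ℕ) (h : i < y) :
    (factor a x y)[i]'(by simpa [factor]) = a (x + i) := by simp [factor]

lemma factor_zero (x : ℕ) : factor a x 0 = [] := by simp [factor]

lemma factor_one (x : ℕ) : factor a x 1 = [a x] := by
  simp [factor, List.range_succ]

lemma factor_append (x y z : ℕ) :
    factor a x (y + z) = factor a x y ++ factor a (x + y) z := by
  unfold factor
  rw [List.range_add, List.map_append, List.map_map]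
  congr 1
  apply List.map_congr_left
  intro i _
  simp [Function.comp]; ring_nf

lemma prefix_split {u v : ℕ} (h : u ≤ v) :
    prefixWord a v = prefixWord a u ++ factor a u (v - u) := by
  unfold prefixWord
  have : v = u + (v - u) := by omega
  rw [this, factor_append]
  simp

@[simp] lemma prefix_length (n : ℕ) : (prefixWord a n).length = n := by
  simp [prefixWord]

lemma pal_factor_iff (x y : ℕ) :
    (factor a x y).Palindrome ↔ ∀ i < y, a (x + i) = a (x + (y - 1 - i)) := by
  constructor
  · intro h i hi
    have hr := h.reverse_eq
    have e : (factor a x y).reverse[i]'(by simp; omega) = a (x + i) := by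
      simp only [hr]
      exact factor_getElem a x y i hi
    have e2 : (factor a x y).reverse[i]'(by simp; omega) = a (x + (y - 1 - i)) := by
      rw [List.getElem_reverse]
      simp [factor]
    exact e.symm.trans e2
  · intro h
    apply List.Palindrome.of_reverse_eq
    apply List.ext_getElem (by simp)
    intro i h1 h2
    rw [List.getElem_reverse]
    simp only [factor_length] at h2 ⊢
    rw [factor_getElem a x y i h2, factor_getElem a x y _ (by omega)]
    exact (h i h2).symm

lemma pal_factor_of (x y : ℕ) (h : ∀ i < y, a (x + i) = a (x + (y - 1 - i))) :
    (factor a x y).Palindrome := (pal_factor_iff a x y).2 h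

/-- lower bound: any decomposition has ≥ palLen pieces -/
lemma palLen_le {w : List α} {ps : List (List α)} (hf : ps.flatten = w)
    (hp : ∀ p ∈ ps, p.Palindrome) : palLen w ≤ ps.length :=
  Nat.sInf_le ⟨ps, rfl, hp, hf⟩

lemma flatten_drop_nil : ∀ ps : List (List α), ∃ qs : List (List α),
    qs.flatten = ps.flatten ∧ qs.length ≤ ps.length ∧ (∀ p ∈ qs, p ∈ ps) ∧ ∀ p ∈ qs, p ≠ [] := by
  intro ps
  induction ps with
  | nil => exact ⟨[], by simp⟩
  | cons p ps ih =>
    obtain ⟨qs, h1, h2, h3, h4⟩ := ih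
    by_cases hp : p = []
    · exact ⟨qs, by simp [h1, hp], by simp; omega,
        fun q hq => List.mem_cons_of_mem _ (h3 q hq), h4⟩
    · exact ⟨p :: qs, by simp [h1], by simpa using h2,
        fun q hq => by rcases List.mem_cons.1 hq with h | h
                       · exact h ▸ List.mem_cons_self
                       · exact List.mem_cons_of_mem _ (h3 q h),
        fun q hq => by rcases List.mem_cons.1 hq with h | h
                       · exact h ▸ hp
                       · exact h4 q h⟩

lemma exists_decomp (w : List α) : ∃ ps : List (List α),
    ps.flatten = w ∧ ps.length = palLen w ∧ (∀ p ∈ ps, p.Palindrome) ∧ ∀ p ∈ ps, p ≠ [] := by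
  have hne : {k | ∃ ps : List (List α),
      ps.length = k ∧ (∀ p ∈ ps, p.Palindrome) ∧ ps.flatten = w}.Nonempty := by
    refine ⟨w.length, w.map (fun x => [x]), by simp, ?_, ?_⟩
    · intro p hp
      simp only [List.mem_map] at hp
      obtain ⟨x, _, rfl⟩ := hp
      exact List.Palindrome.singleton x
    · induction w with
      | nil => simp
      | cons c w ih => simpa using ih
  obtain ⟨ps, hlen, hpal, hflat⟩ :
      ∃ ps : List (List α), ps.length = palLen w ∧ (∀ p ∈ ps, p.Palindrome) ∧ ps.flatten = w :=
    Nat.sInf_mem hne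
  obtain ⟨qs, h1, h2, h3, h4⟩ := flatten_drop_nil ps
  have hq : palLen w ≤ qs.length := palLen_le (h1.trans hflat) (fun p hp => hpal p (h3 p hp))
  exact ⟨qs, h1.trans hflat, le_antisymm (by omega) hq, fun p hp => hpal p (h3 p hp), h4⟩

@[simp] lemma P_zero : P a 0 = 0 := by
  have : palLen (prefixWord a 0) ≤ ([] : List (List α)).length :=
    palLen_le (by simp [prefixWord, factor]) (by simp)
  simpa [P] using this

/-- append a palindromic factor: P grows by at most 1 -/
lemma P_step {u v : ℕ} (huv : u ≤ v) (hpal : (factor a u (v - u)).Palindrome) :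
    P a v ≤ P a u + 1 := by
  obtain ⟨ps, hflat, hlen, hpal', _⟩ := exists_decomp (prefixWord a u)
  have : (ps ++ [factor a u (v - u)]).flatten = prefixWord a v := by
    rw [List.flatten_append, prefix_split a huv, hflat]; simp
  have h2 : P a v ≤ (ps ++ [factor a u (v - u)]).length :=
    palLen_le this (by
      intro p hp
      rcases List.mem_append.1 hp with h | h
      · exact hpal' p h
      · simpa using (List.mem_singleton.1 h) ▸ hpal)
  simpa [hlen, P] using h2

/-- last piece extraction -/
lemma exists_last {n : ℕ} (hn : 0 < n) :
    ∃ u, u < n ∧ P a u + 1 ≤ P a n ∧ (factor a u (n - u)).Palindrome := by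
  obtain ⟨ps, hflat, hlen, hpal, hnil⟩ := exists_decomp (prefixWord a n)
  have hne : ps ≠ [] := by
    intro h
    rw [h] at hflat
    have := congrArg List.length hflat
    simp at this; omega
  set p := ps.getLast hne with hp
  set qs := ps.dropLast with hqs
  have hsplit : qs ++ [p] = ps := List.dropLast_append_getLast hne
  have hflat2 : qs.flatten ++ p = prefixWord a n := by
    rw [← hflat, ← hsplit]; simp
  have hlen2 := congrArg List.length hflat2
  simp only [List.length_append, List.length_flatten, prefix_length] at hlen2
  have hplen : p.length ≤ n := by omega
  set u := n - p.length with hu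
  have hul : (List.map List.length qs).sum = u := by omega
  have hsp : prefixWord a n = prefixWord a u ++ factor a u (n - u) :=
    prefix_split a (by omega)
  have hinj : qs.flatten = prefixWord a u ∧ p = factor a u (n - u) :=
    List.append_inj (hflat2.trans hsp) (by simp [List.length_flatten, hul])
  have hpne : p ≠ [] := hnil p (List.getLast_mem hne)
  have hppal : p.Palindrome := hpal p (List.getLast_mem hne)
  have hulen : u < n := by
    rcases Nat.eq_zero_or_pos p.length with h | h
    · exact absurd (List.length_eq_zero_iff.1 h) hpne
    · omega
  refine ⟨u, hulen, ?_, hinj.2 ▸ hppal⟩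
  have h1 : P a u ≤ qs.length := palLen_le hinj.1
    (fun q hq => hpal q ((List.dropLast_sublist ps).subset hq))
  have h2 : qs.length + 1 = ps.length := by rw [← hsplit]; simp
  have h3 : P a n = palLen (prefixWord a n) := rfl
  omega

/-! ### Block structure from `InC` -/

def Blocks : Prop :=
  ∀ j : ℕ, a (4*j) = a (4*j+3) ∧ a (4*j+1) = a (4*j+2) ∧ a (4*j) ≠ a (4*j+1)

lemma inC_blocks (hC : InC a) : Blocks a := by
  obtain ⟨c, f, w, h0, hrec, hne, hw⟩ := hC
  have hlen : ∀ n, (w n).length = 4^n := fun n => by rw [hw n]; simp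
  have hget : ∀ n i (h : i < 4^n), (w n)[i]'(by rw [hlen]; exact h) = a i := by
    intro n i h
    simp only [hw n]
    simp
  -- the three-part identities
  have key : ∀ n i, i < 4^n →
      a (4^n + i) = f n (a i) ∧ a (2*4^n + i) = f n (a i) ∧ a (3*4^n + i) = a i := by
    intro n i hi
    have h4 : (4:ℕ)^(n+1) = 4 * 4^n := by ring
    have hW : (w n).length = 4^n := hlen n
    refine ⟨?_, ?_, ?_⟩
    · have hj : 4^n + i < 4^(n+1) := by omega
      rw [← hget (n+1) _ hj]
      simp only [hrec n]
      rw [List.getElem_append_left (by simp [hW]; omega)]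
      rw [List.getElem_append_left (by simp [hW]; omega)]
      rw [List.getElem_append_right (by simp [hW])]
      simp only [hW]
      have he : 4^n + i - 4^n = i := by omega
      simp only [he]
      rw [List.getElem_map]
      congr 1
      exact hget n i hi
    · have hj : 2*4^n + i < 4^(n+1) := by omega
      rw [← hget (n+1) _ hj]
      simp only [hrec n]
      rw [List.getElem_append_left (by simp [hW]; omega)]
      rw [List.getElem_append_right (by simp [hW]; omega)]
      simp only [List.length_append, List.length_map, hW]
      have he : 2*4^n + i - (4^n + 4^n) = i := by omega
      simp only [he]
      rw [List.getElem_map]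
      congr 1
      exact hget n i hi
    · have hj : 3*4^n + i < 4^(n+1) := by omega
      rw [← hget (n+1) _ hj]
      simp only [hrec n]
      rw [List.getElem_append_right (by simp [hW]; omega)]
      simp only [List.length_append, List.length_map, hW]
      have he : 3*4^n + i - (4^n + 4^n + 4^n) = i := by omega
      simp only [he]
      exact hget n i hi
  -- base block
  have ha0 : a 0 = c := by
    have h' : List.map a (List.range (4^0)) = [c] := (hw 0).symm.trans h0
    have hr1 : List.range (4^0) = [0] := by
      rw [show (4:ℕ)^0 = 0+1 by norm_num, List.range_succ]
      simp
    rw [hr1] at h'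
    simpa using h'
  have base : a 0 = a 3 ∧ a 1 = a 2 ∧ a 0 ≠ a 1 := by
    have k0 := key 0 0 (by norm_num)
    simp only [pow_zero] at k0
    obtain ⟨k1, k2, k3⟩ := k0
    norm_num at k1 k2 k3
    have hfc : f 0 c ≠ c := by
      intro h
      apply hne 0
      rw [h0]
      simp [h]
    refine ⟨by rw [k3], by rw [k1, k2], ?_⟩
    rw [k1, ha0]
    exact fun h => hfc h.symm
  -- strong induction on j
  intro j
  induction j using Nat.strong_induction_on with
  | _ j ih =>
    rcases Nat.eq_zero_or_pos j with rfl | hj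
    · simpa using base
    · set n := Nat.log 4 (4*j) with hn
      have hn1 : 4^n ≤ 4*j := Nat.pow_log_le_self 4 (by omega)
      have hn2 : 4*j < 4^(n+1) := Nat.lt_pow_succ_log_self (by norm_num) _
      have hnpos : 1 ≤ n := by
        rcases Nat.eq_zero_or_pos n with h | h
        · rw [h] at hn2; norm_num at hn2; omega
        · exact h
      obtain ⟨K, hK⟩ : ∃ K, (4:ℕ)^n = 4*K := ⟨4^(n-1), by
        rw [← pow_succ']
        congr 1
        omega⟩
      have hKpos : 0 < K := by
        have : 0 < (4:ℕ)^n := pow_pos (by norm_num) n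
        omega
      have h4n1 : (4:ℕ)^(n+1) = 4*4^n := by ring
      set q := 4*j / 4^n with hq
      set i := 4*j % 4^n with hi
      have hdiv : 4^n * q + i = 4*j := Nat.div_add_mod _ _
      have hilt : i < 4^n := Nat.mod_lt _ (by positivity)
      have hq1 : 1 ≤ q := by
        rcases Nat.eq_zero_or_pos q with h | h
        · rw [h, Nat.mul_zero] at hdiv
          omega
        · exact h
      have hq3 : q ≤ 3 := by
        by_contra h
        push_neg at h
        have h2 : 4^n * 4 ≤ 4^n * q := Nat.mul_le_mul_left _ (by omega)
        omega
      obtain ⟨j', hj'⟩ : ∃ j', i = 4*j' := by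
        have h2 : (4:ℕ) ∣ 4^n * q := ⟨K*q, by rw [hK]; ring⟩
        have hd : (4:ℕ) ∣ i := by omega
        exact hd
      have hj'lt : j' < j := by
        have : 0 < 4^n * q := by positivity
        omega
      have hi3 : i + 3 < 4^n := by omega
      obtain ⟨b1, b2, b3⟩ := ih j' hj'lt
      have trans : ∀ e, e ≤ 3 → a (4*j + e) =
          (if q = 3 then a (4*j' + e) else f n (a (4*j' + e))) := by
        intro e he
        interval_cases q
        · have hje : 4*j + e = 4^n + (4*j' + e) := by omega
          rw [hje, if_neg (by norm_num)]
          exact (key n (4*j'+e) (by omega)).1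
        · have hje : 4*j + e = 2*4^n + (4*j' + e) := by omega
          rw [hje, if_neg (by norm_num)]
          exact (key n (4*j'+e) (by omega)).2.1
        · have hje : 4*j + e = 3*4^n + (4*j' + e) := by omega
          rw [hje, if_pos rfl]
          exact (key n (4*j'+e) (by omega)).2.2
      have t0 := trans 0 (by norm_num)
      have t1 := trans 1 (by norm_num)
      have t2 := trans 2 (by norm_num)
      have t3 := trans 3 (by norm_num)
      norm_num at t0 t1 t2 t3
      by_cases h3 : q = 3
      · simp only [if_pos h3] at t0 t1 t2 t3
        exact ⟨by rw [t0, t3, b1], by rw [t1, t2, b2], by rw [t0, t1]; exact b3⟩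
      · simp only [if_neg h3] at t0 t1 t2 t3
        refine ⟨by rw [t0, t3, b1], by rw [t1, t2, b2], ?_⟩
        rw [t0, t1]
        intro h
        exact b3 ((f n).injective h)

/-! ### Structure of palindromic factors -/

lemma adj_mod (H : Blocks a) {m : ℕ} (h : a m = a (m+1)) : m % 4 = 1 ∨ m % 4 = 3 := by
  by_contra hc
  push_neg at hc
  obtain ⟨b1, b2, b3⟩ := H (m/4)
  have h4 : m % 4 = 0 ∨ m % 4 = 2 := by omega
  rcases h4 with h4 | h4
  · have e1 : 4*(m/4) = m := by omega
    have e2 : 4*(m/4)+1 = m+1 := by omega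
    rw [e1] at b3
    exact b3 h
  · have e1 : 4*(m/4)+2 = m := by omega
    have e2 : 4*(m/4)+3 = m+1 := by omega
    rw [e1] at b2
    rw [e2] at b1
    -- b2 : a (4*(m/4)+1) = a m, b1 : a (4*(m/4)) = a (m+1)
    exact b3 (b1.trans (h.symm.trans b2.symm))

lemma skip2_mod (H : Blocks a) {m : ℕ} (h : a m = a (m+2)) : m % 4 = 2 ∨ m % 4 = 3 := by
  by_contra hc
  push_neg at hc
  obtain ⟨b1, b2, b3⟩ := H (m/4)
  have h4 : m % 4 = 0 ∨ m % 4 = 1 := by omega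
  rcases h4 with h4 | h4
  · have e1 : 4*(m/4) = m := by omega
    have e2 : 4*(m/4)+2 = m+2 := by omega
    have e3 : 4*(m/4)+1 = m+1 := by omega
    rw [e1] at b3
    rw [e2] at b2
    apply b3
    rw [h, ← b2, e3]
  · have e1 : 4*(m/4)+1 = m := by omega
    have e2 : 4*(m/4)+3 = m+2 := by omega
    rw [e2] at b1
    apply b3
    rw [b1, ← h, e1]

/-- no odd palindromic factor of length ≥ 5 -/
lemma no_odd_ge5 (H : Blocks a) {x y : ℕ} (hpal : (factor a x y).Palindrome)
    (hodd : y % 2 = 1) (h5 : 5 ≤ y) : False := by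
  have E := (pal_factor_iff a x y).1 hpal
  set h := y / 2 with hh
  have hy : y = 2*h + 1 := by omega
  have h2 : 2 ≤ h := by omega
  have e1 : a (x + h - 1) = a ((x + h - 1) + 2) := by
    have := E (h-1) (by omega)
    have i2 : x + (y - 1 - (h-1)) = (x + h - 1) + 2 := by omega
    have i1 : x + (h-1) = x + h - 1 := by omega
    rw [i2, i1] at this
    exact this
  have e2 : a (x + h - 2) = a ((x + h - 2) + 4) := by
    have := E (h-2) (by omega)
    have i2 : x + (y - 1 - (h-2)) = (x + h - 2) + 4 := by omega
    have i1 : x + (h-2) = x + h - 2 := by omega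
    rw [i2, i1] at this
    exact this
  rcases skip2_mod a H e1 with hm | hm
  · -- center c = x + h = 4j+3
    set j := (x + h) / 4 with hj
    have hc : x + h = 4*j + 3 := by omega
    obtain ⟨_, b2, _⟩ := H j
    obtain ⟨_, _, c3⟩ := H (j+1)
    have E1 : a (4*j+2) = a (4*j+4) := by
      have i2 : (x + h - 1) + 2 = 4*j+4 := by omega
      have i1 : x + h - 1 = 4*j+2 := by omega
      rw [i2, i1] at e1; exact e1
    have E2 : a (4*j+1) = a (4*j+5) := by
      have i2 : (x + h - 2) + 4 = 4*j+5 := by omega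
      have i1 : x + h - 2 = 4*j+1 := by omega
      rw [i2, i1] at e2; exact e2
    apply c3
    rw [show 4*(j+1)+1 = 4*j+5 by ring, show 4*(j+1) = 4*j+4 by ring]
    rw [← E1, ← b2, E2]
  · -- center c = x + h = 4j+4
    set j := (x + h - 4) / 4 with hj
    have hc : x + h = 4*j + 4 := by omega
    obtain ⟨b1, b2, b3⟩ := H j
    obtain ⟨_, c2, _⟩ := H (j+1)
    have E1 : a (4*j+3) = a (4*j+5) := by
      have i2 : (x + h - 1) + 2 = 4*j+5 := by omega
      have i1 : x + h - 1 = 4*j+3 := by omega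
      rw [i2, i1] at e1; exact e1
    have E2 : a (4*j+2) = a (4*j+6) := by
      have i2 : (x + h - 2) + 4 = 4*j+6 := by omega
      have i1 : x + h - 2 = 4*j+2 := by omega
      rw [i2, i1] at e2; exact e2
    apply b3
    have c2' : a (4*j+5) = a (4*j+6) := by
      rw [show 4*(j+1)+2 = 4*j+6 by ring, show 4*(j+1)+1 = 4*j+5 by ring] at c2
      exact c2
    rw [b1, b2, E2, ← c2', ← E1]

/-- length-3 palindromic factors start at 2 or 3 mod 4 -/
lemma len3_mod (H : Blocks a) {x : ℕ} (hpal : (factor a x 3).Palindrome) :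
    x % 4 = 2 ∨ x % 4 = 3 := by
  have E := (pal_factor_iff a x 3).1 hpal
  have e := E 0 (by norm_num)
  norm_num at e
  exact skip2_mod a H e

/-- even palindromic factors satisfy (2x+y) % 4 = 0 -/
lemma even_mod (H : Blocks a) {x y : ℕ} (hpal : (factor a x y).Palindrome)
    (heven : y % 2 = 0) (hy : 0 < y) : (2*x + y) % 4 = 0 := by
  have E := (pal_factor_iff a x y).1 hpal
  have e := E (y/2 - 1) (by omega)
  have i1 : x + (y/2 - 1) = x + y/2 - 1 := by omega
  have i2 : x + (y - 1 - (y/2-1)) = (x + y/2 - 1) + 1 := by omega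
  rw [i1, i2] at e
  have := adj_mod a H e
  omega

def Blkeq (p q : ℕ) : Prop := a (4*p) = a (4*q) ∧ a (4*p+1) = a (4*q+1)

lemma Blkeq.symm' {p q : ℕ} (h : Blkeq a p q) : Blkeq a q p := ⟨h.1.symm, h.2.symm⟩

lemma Blkeq.refl' (p : ℕ) : Blkeq a p p := ⟨rfl, rfl⟩

/-- mirrored blocks give an aligned palindrome -/
lemma aligned_pal (H : Blocks a) {z r : ℕ}
    (hB : ∀ i < r, Blkeq a (z+i) (z+(r-1-i))) :
    (factor a (4*z) (4*r)).Palindrome := by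
  apply pal_factor_of
  intro ii hii
  obtain ⟨qq, e, he4, hieq, hqlt⟩ : ∃ qq e, e < 4 ∧ ii = 4*qq + e ∧ qq < r :=
    ⟨ii/4, ii%4, by omega, by omega, by omega⟩
  obtain ⟨B1, B2⟩ := hB qq hqlt
  have i1 : 4*z + ii = 4*(z+qq) + e := by omega
  have i2 : 4*z + (4*r - 1 - ii) = 4*(z+(r-1-qq)) + (3 - e) := by omega
  rw [i1, i2]
  obtain ⟨u1, u2, _⟩ := H (z+qq)
  obtain ⟨v1, v2, _⟩ := H (z+(r-1-qq))
  interval_cases e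
  · rw [show (3:ℕ) - 0 = 3 by norm_num, ← v1]
    simpa using B1
  · rw [show (3:ℕ) - 1 = 2 by norm_num, ← v2]
    exact B2
  · rw [show (3:ℕ) - 2 = 1 by norm_num, ← u2]
    exact B2
  · rw [show (3:ℕ) - 3 = 0 by norm_num, ← u1]
    simpa using B1

/-- mirror blocks from a (2,2)-even palindrome -/
lemma mirror22 (H : Blocks a) {u t : ℕ} (hut : u ≤ t)
    (hpal : (factor a (4*u+2) (4*(t-u))).Palindrome) :
    ∀ i ≤ t - u, Blkeq a (u+i) (t-i) := by
  set d := t - u with hd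
  have E := (pal_factor_iff a _ _).1 hpal
  have main : ∀ i < d, Blkeq a (u+i) (t-i) := by
    intro i hi
    constructor
    · have e := E (4*i+1) (by omega)
      have i1 : 4*u+2 + (4*i+1) = 4*(u+i) + 3 := by omega
      have i2 : 4*u+2 + (4*d - 1 - (4*i+1)) = 4*(t-i) := by omega
      rw [i1, i2] at e
      obtain ⟨b1, _, _⟩ := H (u+i)
      rw [b1]; exact e
    · have e := E (4*i) (by omega)
      have i1 : 4*u+2 + 4*i = 4*(u+i) + 2 := by omega
      have i2 : 4*u+2 + (4*d - 1 - 4*i) = 4*(t-i) + 1 := by omega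
      rw [i1, i2] at e
      obtain ⟨_, b2, _⟩ := H (u+i)
      rw [b2]; exact e
  intro i hi
  rcases Nat.lt_or_ge i d with h | h
  · exact main i h
  · have hid : i = d := by omega
    rcases Nat.eq_zero_or_pos d with h0 | h0
    · have h1 : u + i = t - i := by omega
      rw [h1]
      exact Blkeq.refl' a _
    · have := (main 0 h0).symm'
      have i1 : u + i = t - 0 := by omega
      have i2 : t - i = u + 0 := by omega
      rw [i1, i2]
      exact this

/-- mirror blocks from a (1,3)-even palindrome -/
lemma mirror13 (H : Blocks a) {u t : ℕ} (hut : u ≤ t)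
    (hpal : (factor a (4*u+1) (4*(t-u)+2)).Palindrome) :
    ∀ i ≤ t - u, Blkeq a (u+i) (t-i) := by
  set d := t - u with hd
  have E := (pal_factor_iff a _ _).1 hpal
  have main : ∀ i < d, Blkeq a (u+i) (t-i) := by
    intro i hi
    constructor
    · have e := E (4*i+2) (by omega)
      have i1 : 4*u+1 + (4*i+2) = 4*(u+i) + 3 := by omega
      have i2 : 4*u+1 + (4*d + 2 - 1 - (4*i+2)) = 4*(t-i) := by omega
      rw [i1, i2] at e
      obtain ⟨b1, _, _⟩ := H (u+i)
      rw [b1]; exact e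
    · have e := E (4*i) (by omega)
      have i1 : 4*u+1 + 4*i = 4*(u+i) + 1 := by omega
      have i2 : 4*u+1 + (4*d + 2 - 1 - 4*i) = 4*(t-i) + 2 := by omega
      rw [i1, i2] at e
      obtain ⟨_, b2, _⟩ := H (t-i)
      rw [b2]; exact e
  intro i hi
  rcases Nat.lt_or_ge i d with h | h
  · exact main i h
  · have hid : i = d := by omega
    rcases Nat.eq_zero_or_pos d with h0 | h0
    · have h1 : u + i = t - i := by omega
      rw [h1]
      exact Blkeq.refl' a _
    · have := (main 0 h0).symm'
      have i1 : u + i = t - 0 := by omega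
      have i2 : t - i = u + 0 := by omega
      rw [i1, i2]
      exact this

/-- mirror blocks from a (3,1)-even palindrome -/
lemma mirror31 (H : Blocks a) {t d : ℕ} (hd : 1 ≤ d)
    (hpal : (factor a (4*t+3) (4*d-2)).Palindrome) :
    ∀ i, 1 ≤ i → i ≤ d - 1 → Blkeq a (t+i) (t+d-i) := by
  have E := (pal_factor_iff a _ _).1 hpal
  intro i h1 h2
  constructor
  · have e := E (4*i-3) (by omega)
    have i1 : 4*t+3 + (4*i-3) = 4*(t+i) := by omega
    have i2 : 4*t+3 + (4*d - 2 - 1 - (4*i-3)) = 4*(t+d-i) + 3 := by omega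
    rw [i1, i2] at e
    obtain ⟨b1, _, _⟩ := H (t+d-i)
    rw [b1]; exact e
  · have e := E (4*i-2) (by omega)
    have i1 : 4*t+3 + (4*i-2) = 4*(t+i) + 1 := by omega
    have i2 : 4*t+3 + (4*d - 2 - 1 - (4*i-2)) = 4*(t+d-i) + 2 := by omega
    rw [i1, i2] at e
    obtain ⟨_, b2, _⟩ := H (t+d-i)
    rw [b2]; exact e

/-! ### Classification and decomposition machinery -/

lemma classify (H : Blocks a) {u v : ℕ} (h : u < v)
    (hpal : (factor a u (v-u)).Palindrome) :
    v = u + 1 ∨ (v = u + 3 ∧ (u % 4 = 2 ∨ u % 4 = 3)) ∨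
      ((v - u) % 2 = 0 ∧ (u + v) % 4 = 0) := by
  by_cases hpar : (v - u) % 2 = 0
  · right; right
    refine ⟨hpar, ?_⟩
    have := even_mod a H hpal hpar (by omega)
    omega
  · have h135 : v - u = 1 ∨ v - u = 3 ∨ 5 ≤ v - u := by omega
    rcases h135 with h1 | h3 | h5
    · left; omega
    · right; left
      rw [h3] at hpal
      exact ⟨by omega, len3_mod a H hpal⟩
    · exact (no_odd_ge5 a H hpal (by omega) h5).elim

lemma block_pal (H : Blocks a) (z : ℕ) : (factor a (4*z) 4).Palindrome := by
  have h := aligned_pal a H (z := z) (r := 1)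
    (fun i hi => by
      have : i = 0 := by omega
      subst this
      simpa using Blkeq.refl' a z)
  simpa using h

def PieceOK (x : ℕ) (p : List α) : Prop :=
  p.Palindrome ∧ p.length ≠ 3 ∧
  (Even p.length → ∃ z r, (factor a (4*z) (4*r)).Palindrome ∧ EmbedCenter x p.length z r)

def Ok (ps : List (List α)) : Prop :=
  ∀ i (hi : i < ps.length), PieceOK a (((ps.take i).map List.length).sum) ps[i]

lemma ok_nil : Ok a [] := fun i hi => absurd hi (by simp)

lemma ok_append {ps : List (List α)} {p : List α} (hok : Ok a ps)
    (hp : PieceOK a ((ps.map List.length).sum) p) : Ok a (ps ++ [p]) := by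
  intro i hi
  simp only [List.length_append, List.length_singleton] at hi
  rcases Nat.lt_or_ge i ps.length with h | h
  · have e1 : (ps ++ [p])[i]'(by simp; omega) = ps[i] := List.getElem_append_left h
    have e2 : (ps ++ [p]).take i = ps.take i := List.take_append_of_le_length (le_of_lt h)
    rw [e1, e2]
    exact hok i h
  · have hi' : i = ps.length := by omega
    subst hi'
    have e1 : (ps ++ [p])[ps.length]'(by simp) = p := by
      rw [List.getElem_append_right (le_refl _)]
      simp
    have e2 : (ps ++ [p]).take ps.length = ps := List.take_left
    rw [e1, e2]
    exact hp

lemma ok_pal_mem {ps : List (List α)} (hok : Ok a ps) : ∀ p ∈ ps, p.Palindrome := by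
  intro p hp
  obtain ⟨i, hi, rfl⟩ := List.mem_iff_getElem.1 hp
  exact (hok i hi).1

lemma P_le {n : ℕ} {ps : List (List α)} (hf : ps.flatten = prefixWord a n)
    (hp : ∀ p ∈ ps, p.Palindrome) : P a n ≤ ps.length := palLen_le hf hp

def GoodStmt (n : ℕ) : Prop :=
  ∃ ps : List (List α), ps.flatten = prefixWord a n ∧ ps.length = P a n ∧ Ok a ps

lemma good_step1 {u n : ℕ} (hun : u ≤ n) (hG : GoodStmt a u)
    (hpal : (factor a u (n-u)).Palindrome) (h3 : n - u ≠ 3)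
    (hev : Even (n - u) → ∃ z r, (factor a (4*z) (4*r)).Palindrome ∧ EmbedCenter u (n-u) z r)
    (hPn : P a u + 1 = P a n) : GoodStmt a n := by
  obtain ⟨qs, hf, hl, hok⟩ := hG
  refine ⟨qs ++ [factor a u (n-u)], ?_, ?_, ?_⟩
  · rw [List.flatten_append, hf, prefix_split a hun]
    simp
  · simp only [List.length_append, List.length_singleton, hl]
    omega
  · apply ok_append a hok
    have hsum : (qs.map List.length).sum = u := by
      rw [← List.length_flatten, hf]
      simp
    rw [hsum]
    exact ⟨hpal, by simpa using h3, by simpa using hev⟩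

lemma good_two {m L n : ℕ} (hn : n = m + L + 1) (hG : GoodStmt a m)
    (hpal1 : (factor a m L).Palindrome) (h31 : L ≠ 3)
    (hev1 : Even L → ∃ z r, (factor a (4*z) (4*r)).Palindrome ∧ EmbedCenter m L z r)
    (hcount : P a m + 2 ≤ P a n) : GoodStmt a n := by
  obtain ⟨qs, hf, hl, hok⟩ := hG
  have hsum : (qs.map List.length).sum = m := by
    rw [← List.length_flatten, hf]
    simp
  have hok1 : Ok a (qs ++ [factor a m L]) := by
    apply ok_append a hok
    rw [hsum]
    exact ⟨hpal1, by simpa using h31, by simpa using hev1⟩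
  have hsum1 : (((qs ++ [factor a m L])).map List.length).sum = m + L := by
    simp [hsum]
  have hok2 : Ok a ((qs ++ [factor a m L]) ++ [factor a (m+L) 1]) := by
    apply ok_append a hok1
    rw [hsum1]
    refine ⟨by rw [factor_one]; exact List.Palindrome.singleton _, by simp, ?_⟩
    intro he
    simp at he
  have hflat : ((qs ++ [factor a m L]) ++ [factor a (m+L) 1]).flatten = prefixWord a n := by
    rw [List.flatten_append, List.flatten_append, hf]
    have e1 : prefixWord a n = prefixWord a (m+L) ++ factor a (m+L) (n - (m+L)) :=
      prefix_split a (by omega)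
    have e2 : prefixWord a (m+L) = prefixWord a m ++ factor a m (m+L-m) :=
      prefix_split a (by omega)
    have e3 : m + L - m = L := by omega
    have e4 : n - (m+L) = 1 := by omega
    rw [e1, e2, e3, e4]
    simp
  have hlen : ((qs ++ [factor a m L]) ++ [factor a (m+L) 1]).length = P a m + 2 := by
    simp [hl]
  have hle : P a n ≤ P a m + 2 := by
    rw [← hlen]
    exact P_le a hflat (ok_pal_mem a hok2)
  exact ⟨_, hflat, by omega, hok2⟩

theorem main (H : Blocks a) : ∀ n : ℕ,
    GoodStmt a n ∧
    (∀ t, n = 4*t+1 → P a (4*t) + 1 ≤ P a n) ∧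
    (∀ t, n = 4*t+2 → P a (4*t) + 1 ≤ P a n) ∧
    (∀ t, n = 4*t+4 → P a n + 1 ≤ P a (4*t+3)) ∧
    (∀ t, n = 4*t+4 → P a n + 1 ≤ P a (4*t+2)) := by
  intro n
  induction n using Nat.strong_induction_on with
  | _ n IH =>
  have IHG : ∀ m, m < n → GoodStmt a m := fun m hm => (IH m hm).1
  have IHC : ∀ t, 4*t+1 < n → P a (4*t) + 1 ≤ P a (4*t+1) := fun t h => (IH _ h).2.1 t rfl
  have IHA : ∀ t, 4*t+2 < n → P a (4*t) + 1 ≤ P a (4*t+2) := fun t h => (IH _ h).2.2.1 t rfl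
  have IHB : ∀ t, 4*t+4 < n → P a (4*t+4) + 1 ≤ P a (4*t+3) := fun t h => (IH _ h).2.2.2.1 t rfl
  have IHD : ∀ t, 4*t+4 < n → P a (4*t+4) + 1 ≤ P a (4*t+2) := fun t h => (IH _ h).2.2.2.2 t rfl
  -- law C
  have lawC : ∀ t, n = 4*t+1 → P a (4*t) + 1 ≤ P a n := by
    rintro t rfl
    obtain ⟨u, hu, hPu, hpal⟩ := exists_last a (show 0 < 4*t+1 by omega)
    rcases classify a H hu hpal with h1 | ⟨h3, hm⟩ | ⟨hev, hm⟩
    · have he : u = 4*t := by omega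
      subst he
      exact hPu
    · -- u = 4t - 2, necessarily t ≥ 1 and u % 4 = 2
      have ht : 1 ≤ t := by omega
      have hu2 : u = 4*(t-1)+2 := by omega
      have hA := IHA (t-1) (by omega)
      have hstep : P a (4*t) ≤ P a (4*(t-1)) + 1 := by
        apply P_step a (u := 4*(t-1)) (v := 4*t) (by omega)
        rw [show 4*t - 4*(t-1) = 4 by omega]
        exact block_pal a H (t-1)
      rw [hu2] at hPu
      omega
    · -- u % 4 = 3
      have hum : u % 4 = 3 := by omega
      set w := u / 4 with hw
      have hu4 : u = 4*w+3 := by omega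
      have hge2 : u + 2 ≤ 4*t+1 := by omega
      have hwt : w + 1 ≤ t := by omega
      have hB := IHB w (by omega)
      have hQ : (factor a (4*(w+1)) (4*((t-w)-1))).Palindrome := by
        apply aligned_pal a H
        intro i hi
        have hmir := mirror31 a H (t := w) (d := t - w) (by omega)
          (by rw [show 4*((t-w)) - 2 = 4*t+1 - u by omega, ← hu4]; exact hpal)
          (i+1) (by omega) (by omega)
        have e1 : w + (i+1) = w+1+i := by omega
        have e2 : w + (t-w) - (i+1) = w+1+((t-w)-1-1-i) := by omega
        rw [e1, e2] at hmir
        exact hmir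
      have hstep : P a (4*t) ≤ P a (4*w+4) + 1 := by
        apply P_step a (u := 4*w+4) (v := 4*t) (by omega)
        rw [show 4*t - (4*w+4) = 4*((t-w)-1) by omega, show (4*w+4 : ℕ) = 4*(w+1) by omega]
        exact hQ
      rw [hu4] at hPu
      omega
  -- law A
  have lawA : ∀ t, n = 4*t+2 → P a (4*t) + 1 ≤ P a n := by
    rintro t rfl
    obtain ⟨u, hu, hPu, hpal⟩ := exists_last a (show 0 < 4*t+2 by omega)
    rcases classify a H hu hpal with h1 | ⟨h3, hm⟩ | ⟨hev, hm⟩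
    · have he : u = 4*t+1 := by omega
      have hC := IHC t (by omega)
      rw [he] at hPu
      omega
    · have ht : 1 ≤ t := by omega
      have hu2 : u = 4*(t-1)+3 := by omega
      have hB := IHB (t-1) (by omega)
      rw [show 4*(t-1)+4 = 4*t by omega] at hB
      rw [hu2] at hPu
      omega
    · have hum : u % 4 = 2 := by omega
      set w := u / 4 with hw
      have hu4 : u = 4*w+2 := by omega
      have hwt : w < t := by omega
      have hD := IHD w (by omega)
      have hmir := mirror22 a H (u := w) (t := t) (by omega)
        (by rw [show 4*(t-w) = 4*t+2 - u by omega, ← hu4]; exact hpal)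
      have hQ : (factor a (4*(w+1)) (4*(t-w-1))).Palindrome := by
        apply aligned_pal a H
        intro i hi
        have h2 := hmir (i+1) (by omega)
        have e1 : w + (i+1) = w+1+i := by omega
        have e2 : t - (i+1) = w+1+(t-w-1-1-i) := by omega
        rw [e1, e2] at h2
        exact h2
      have hstep : P a (4*t) ≤ P a (4*w+4) + 1 := by
        apply P_step a (u := 4*w+4) (v := 4*t) (by omega)
        rw [show 4*t - (4*w+4) = 4*(t-w-1) by omega, show (4*w+4 : ℕ) = 4*(w+1) by omega]
        exact hQ
      rw [hu4] at hPu
      omega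
  -- law B
  have lawB : ∀ t, n = 4*t+4 → P a n + 1 ≤ P a (4*t+3) := by
    rintro t rfl
    obtain ⟨u, hu, hPu, hpal⟩ := exists_last a (show 0 < 4*t+3 by omega)
    rcases classify a H hu hpal with h1 | ⟨h3, hm⟩ | ⟨hev, hm⟩
    · have he : u = 4*t+2 := by omega
      have hA := IHA t (by omega)
      have hstep : P a (4*t+4) ≤ P a (4*t) + 1 := by
        apply P_step a (u := 4*t) (v := 4*t+4) (by omega)
        rw [show 4*t+4 - 4*t = 4 by omega]
        exact block_pal a H t
      rw [he] at hPu
      omega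
    · omega
    · have hum : u % 4 = 1 := by omega
      set w := u / 4 with hw
      have hu4 : u = 4*w+1 := by omega
      have hwt : w ≤ t := by omega
      have hC := IHC w (by omega)
      have hmir := mirror13 a H (u := w) (t := t) (by omega)
        (by rw [show 4*(t-w)+2 = 4*t+3 - u by omega, ← hu4]; exact hpal)
      have hQ : (factor a (4*w) (4*(t-w+1))).Palindrome := by
        apply aligned_pal a H
        intro i hi
        rcases Nat.lt_or_ge i (t-w+1-1-i) with hcmp | hcmp
        · have h2 := hmir i (by omega)
          have e2 : t - i = w+(t-w+1-1-i) := by omega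
          rw [e2] at h2
          exact h2
        · have h2 := (hmir (t-w+1-1-i) (by omega)).symm'
          have e1 : t - (t-w+1-1-i) = w + i := by omega
          rw [e1] at h2
          exact h2
      have hstep : P a (4*t+4) ≤ P a (4*w) + 1 := by
        apply P_step a (u := 4*w) (v := 4*t+4) (by omega)
        rw [show 4*t+4 - 4*w = 4*(t-w+1) by omega]
        exact hQ
      rw [hu4] at hPu
      omega
  -- law D
  have lawD : ∀ t, n = 4*t+4 → P a n + 1 ≤ P a (4*t+2) := by
    rintro t rfl
    obtain ⟨u, hu, hPu, hpal⟩ := exists_last a (show 0 < 4*t+2 by omega)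
    rcases classify a H hu hpal with h1 | ⟨h3, hm⟩ | ⟨hev, hm⟩
    · have he : u = 4*t+1 := by omega
      have hC := IHC t (by omega)
      have hstep : P a (4*t+4) ≤ P a (4*t) + 1 := by
        apply P_step a (u := 4*t) (v := 4*t+4) (by omega)
        rw [show 4*t+4 - 4*t = 4 by omega]
        exact block_pal a H t
      rw [he] at hPu
      omega
    · have ht : 1 ≤ t := by omega
      have hu2 : u = 4*(t-1)+3 := by omega
      have hB := IHB (t-1) (by omega)
      rw [show 4*(t-1)+4 = 4*t by omega] at hB
      have hstep : P a (4*t+4) ≤ P a (4*t) + 1 := by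
        apply P_step a (u := 4*t) (v := 4*t+4) (by omega)
        rw [show 4*t+4 - 4*t = 4 by omega]
        exact block_pal a H t
      rw [hu2] at hPu
      omega
    · have hum : u % 4 = 2 := by omega
      set w := u / 4 with hw
      have hu4 : u = 4*w+2 := by omega
      have hwt : w < t := by omega
      have hA := IHA w (by omega)
      have hmir := mirror22 a H (u := w) (t := t) (by omega)
        (by rw [show 4*(t-w) = 4*t+2 - u by omega, ← hu4]; exact hpal)
      have hQ : (factor a (4*w) (4*(t-w+1))).Palindrome := by
        apply aligned_pal a H
        intro i hi
        rcases le_or_gt i (t-w) with hcmp | hcmp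
        · have h2 := hmir i hcmp
          have e2 : t - i = w+(t-w+1-1-i) := by omega
          rw [e2] at h2
          exact h2
        · omega
      have hstep : P a (4*t+4) ≤ P a (4*w) + 1 := by
        apply P_step a (u := 4*w) (v := 4*t+4) (by omega)
        rw [show 4*t+4 - 4*w = 4*(t-w+1) by omega]
        exact hQ
      rw [hu4] at hPu
      omega
  -- Good decomposition at n
  have good : GoodStmt a n := by
    rcases Nat.eq_zero_or_pos n with rfl | hn
    · refine ⟨[], by simp [prefixWord, factor], by simp, ok_nil a⟩
    obtain ⟨u, hu, hPu, hpal⟩ := exists_last a hn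
    have hPn : P a n ≤ P a u + 1 := P_step a (le_of_lt hu) hpal
    rcases classify a H hu hpal with h1 | ⟨h3, hm⟩ | ⟨hev, hm⟩
    · -- single letter
      apply good_step1 a (le_of_lt hu) (IHG u hu) hpal (by omega) ?_ (by omega)
      intro he
      rw [show n - u = 1 by omega] at he
      simp at he
    · -- length-3 last piece
      rcases hm with hm2 | hm3
      · -- u = 4t+2
        set t := u / 4 with ht
        have hu4 : u = 4*t+2 := by omega
        have hA := IHA t (by omega)
        apply good_two a (m := 4*t) (L := 4) (by omega) (IHG (4*t) (by omega))
          (block_pal a H t) (by omega) ?_ ?_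
        · intro _
          refine ⟨t, 1, by simpa using block_pal a H t, ?_⟩
          unfold EmbedCenter
          omega
        · rw [hu4] at hPu
          omega
      · -- u = 4t+3
        set t := u / 4 with ht
        have hu4 : u = 4*t+3 := by omega
        have hB := IHB t (by omega)
        apply good_two a (m := 4*t+4) (L := 1) (by omega) (IHG (4*t+4) (by omega))
          (by rw [factor_one]; exact List.Palindrome.singleton _) (by omega) ?_ ?_
        · intro he
          simp at he
        · rw [hu4] at hPu
          omega
    · -- even last piece
      have hum : u % 4 = 0 ∨ u % 4 = 1 ∨ u % 4 = 2 ∨ u % 4 = 3 := by omega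
      have hd2 : 2 ≤ n - u := by omega
      rcases hum with h0 | h1 | h2 | h3
      · -- (0,0) aligned piece
        apply good_step1 a (le_of_lt hu) (IHG u hu) hpal (by omega) ?_ (by omega)
        intro _
        refine ⟨u/4, (n-u)/4, ?_, ?_⟩
        · rw [show 4*(u/4) = u by omega, show 4*((n-u)/4) = n - u by omega]
          exact hpal
        · unfold EmbedCenter
          omega
      · -- (1,3) piece
        set w := u / 4 with hw
        set t := n / 4 with htq
        have hu4 : u = 4*w+1 := by omega
        have hn4 : n = 4*t+3 := by omega
        have hwt : w ≤ t := by omega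
        have hmir := mirror13 a H (u := w) (t := t) hwt
          (by rw [show 4*(t-w)+2 = n - u by omega, ← hu4]; exact hpal)
        have hQ : (factor a (4*w) (4*(t-w+1))).Palindrome := by
          apply aligned_pal a H
          intro i hi
          rcases le_or_gt i (t-w) with hcmp | hcmp
          · have hx := hmir i hcmp
            have e2 : t - i = w+(t-w+1-1-i) := by omega
            rw [e2] at hx
            exact hx
          · omega
        apply good_step1 a (le_of_lt hu) (IHG u hu) hpal (by omega) ?_ (by omega)
        intro _
        refine ⟨w, t-w+1, hQ, ?_⟩
        unfold EmbedCenter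
        omega
      · -- (2,2) piece
        set w := u / 4 with hw
        set t := n / 4 with htq
        have hu4 : u = 4*w+2 := by omega
        have hn4 : n = 4*t+2 := by omega
        have hwt : w < t := by omega
        have hmir := mirror22 a H (u := w) (t := t) (by omega)
          (by rw [show 4*(t-w) = n - u by omega, ← hu4]; exact hpal)
        have hQ : (factor a (4*w) (4*(t-w+1))).Palindrome := by
          apply aligned_pal a H
          intro i hi
          rcases le_or_gt i (t-w) with hcmp | hcmp
          · have hx := hmir i hcmp
            have e2 : t - i = w+(t-w+1-1-i) := by omega
            rw [e2] at hx
            exact hx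
          · omega
        apply good_step1 a (le_of_lt hu) (IHG u hu) hpal (by omega) ?_ (by omega)
        intro _
        refine ⟨w, t-w+1, hQ, ?_⟩
        unfold EmbedCenter
        omega
      · -- (3,1) piece : reroute through law B
        set t := u / 4 with htq
        set t' := n / 4 with ht'
        have hu4 : u = 4*t+3 := by omega
        have hn4 : n = 4*t'+1 := by omega
        have htt : t + 1 ≤ t' := by omega
        have hB := IHB t (by omega)
        have hQ : (factor a (4*(t+1)) (4*(t'-t-1))).Palindrome := by
          apply aligned_pal a H
          intro i hi
          have hmir := mirror31 a H (t := t) (d := t' - t) (by omega)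
            (by rw [show 4*(t'-t) - 2 = n - u by omega, ← hu4]; exact hpal)
            (i+1) (by omega) (by omega)
          have e1 : t + (i+1) = t+1+i := by omega
          have e2 : t + (t'-t) - (i+1) = t+1+(t'-t-1-1-i) := by omega
          rw [e1, e2] at hmir
          exact hmir
        apply good_two a (m := 4*t+4) (L := 4*(t'-t-1)) (by omega) (IHG (4*t+4) (by omega))
          (by rw [show (4*t+4 : ℕ) = 4*(t+1) by omega]; exact hQ) (by omega) ?_ ?_
        · intro _
          refine ⟨t+1, t'-t-1, hQ, ?_⟩
          unfold EmbedCenter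
          omega
        · rw [hu4] at hPu
          omega
  exact ⟨good, lawC, lawA, lawB, lawD⟩

end TM4

theorem stmt4 {α : Type*} (a : ℕ → α) (hC : InC a) (k : ℕ) :
    ∃ ps : List (List α),
      ps.flatten = prefixWord a k ∧ ps.length = P a k ∧ (∀ p ∈ ps, p.Palindrome) ∧
      ∀ i (hi : i < ps.length),
        (ps.get ⟨i, hi⟩).length ≠ 3 ∧
        (Even (ps.get ⟨i, hi⟩).length →
          ∃ z r : ℕ, (factor a (4 * z) (4 * r)).Palindrome ∧
            EmbedCenter (((ps.take i).map List.length).sum)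
              (ps.get ⟨i, hi⟩).length z r) := by
  obtain ⟨ps, hf, hl, hok⟩ := (TM4.main a (TM4.inC_blocks a hC) k).1
  refine ⟨ps, hf, hl, TM4.ok_pal_mem a hok, ?_⟩
  intro i hi
  have h := hok i hi
  exact ⟨by simpa using h.2.1, by simpa using h.2.2⟩
end

section
/- Let a : ℕ → α be a sequence in the class 𝒞 and let P_a(n) denote the palindromic length of its prefix of length n. Then for every k ≥ 0: P_a(4k+2) ≥ P_a(4k+4) + 1, P_a(4k+3) ≥ P_a(4k+4) + 1, and P_a(4k+1) ≥ P_a(4k+4). -/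
namespace Stmt5Aux

variable {α : Type*}

/-- pointwise palindromicity of a factor -/
def IsPalFactor (a : ℕ → α) (x y : ℕ) : Prop :=
  ∀ s t, s + t + 1 = y → a (x + s) = a (x + t)

lemma factor_length (a : ℕ → α) (x y : ℕ) : (factor a x y).length = y := by
  simp [factor]

lemma factor_getElem (a : ℕ → α) (x y i : ℕ) (h : i < y) :
    (factor a x y)[i]'(by simpa [factor_length] using h) = a (x + i) := by
  simp [factor]

lemma factor_append (a : ℕ → α) (x y z : ℕ) :
    factor a x y ++ factor a (x + y) z = factor a x (y + z) := by
  simp only [factor, List.range_add, List.map_append, List.map_map]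
  congr 1
  ext i
  simp [Function.comp, Nat.add_assoc]

lemma prefixWord_length (a : ℕ → α) (n : ℕ) : (prefixWord a n).length = n := by
  simp [prefixWord, factor_length]

lemma prefixWord_getElem (a : ℕ → α) (n i : ℕ) (h : i < n) :
    (prefixWord a n)[i]'(by simpa [prefixWord_length] using h) = a i := by
  simp [prefixWord, factor]

lemma prefixWord_take (a : ℕ → α) {m n : ℕ} (h : m ≤ n) :
    (prefixWord a n).take m = prefixWord a m := by
  simp [prefixWord, factor, ← List.map_take, List.take_range, Nat.min_eq_left h]

lemma factor_getElem? (a : ℕ → α) (x y i : ℕ) (h : i < y) :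
    (factor a x y)[i]? = some (a (x + i)) := by
  simp [factor, List.getElem?_range h]

lemma palindrome_factor_iff (a : ℕ → α) (x y : ℕ) :
    (factor a x y).Palindrome ↔ IsPalFactor a x y := by
  rw [List.Palindrome.iff_reverse_eq]
  constructor
  · intro h s t hst
    have h2 := List.getElem?_reverse' (l := factor a x y) (i := t) (j := s)
      (by rw [factor_length]; omega)
    rw [h, factor_getElem? a x y t (by omega), factor_getElem? a x y s (by omega)] at h2
    exact (Option.some.inj h2).symm
  · intro h
    apply List.ext_getElem?
    intro i
    rcases Nat.lt_or_ge i y with hi | hi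
    · have h2 := List.getElem?_reverse' (l := factor a x y) (i := i) (j := y - 1 - i)
        (by rw [factor_length]; omega)
      rw [h2, factor_getElem? a x y (y - 1 - i) (by omega),
        factor_getElem? a x y i hi]
      exact congrArg some (h (y - 1 - i) i (by omega))
    · rw [List.getElem?_eq_none, List.getElem?_eq_none] <;>
        simp [factor_length] <;> omega

lemma P_def (a : ℕ → α) (n : ℕ) : P a n = palLen (prefixWord a n) := rfl

lemma flatten_map_singleton (l : List α) : (l.map fun c => [c]).flatten = l := by
  induction l <;> simp_all

lemma palLen_le {w : List α} {k : ℕ}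
    (h : ∃ ps : List (List α),
      ps.length = k ∧ (∀ p ∈ ps, p.Palindrome) ∧ ps.flatten = w) :
    palLen w ≤ k :=
  Nat.sInf_le h

lemma palLen_spec (w : List α) :
    ∃ ps : List (List α),
      ps.length = palLen w ∧ (∀ p ∈ ps, p.Palindrome) ∧ ps.flatten = w := by
  have hne : {k | ∃ ps : List (List α),
      ps.length = k ∧ (∀ p ∈ ps, p.Palindrome) ∧ ps.flatten = w}.Nonempty := by
    refine ⟨w.length, w.map fun c => [c], by simp, ?_, flatten_map_singleton w⟩
    intro p hp
    simp only [List.mem_map] at hp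
    obtain ⟨c, _, rfl⟩ := hp
    exact List.Palindrome.singleton c
  exact Nat.sInf_mem hne

lemma extract (a : ℕ → α) {N : ℕ} (hN : 1 ≤ N) :
    ∃ x y, x + y = N ∧ 1 ≤ y ∧ IsPalFactor a x y ∧ P a x + 1 ≤ P a N := by
  obtain ⟨ps, hlen, hpal, hflat⟩ := palLen_spec (prefixWord a N)
  set qs := ps.filter (fun l => !l.isEmpty) with hqs
  have hflatq : qs.flatten = prefixWord a N := by
    rw [hqs, List.flatten_filter_not_isEmpty, hflat]
  have hpalq : ∀ p ∈ qs, p.Palindrome := fun p hp =>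
    hpal p (List.mem_of_mem_filter hp)
  have hlenq : qs.length = P a N := by
    have h1 : P a N ≤ qs.length := palLen_le ⟨qs, rfl, hpalq, hflatq⟩
    have h2 : qs.length ≤ P a N := by
      rw [P_def, ← hlen]; exact List.length_filter_le _ _
    omega
  have hqne : qs ≠ [] := by
    intro h
    rw [h] at hflatq
    have := congrArg List.length hflatq
    simp [prefixWord_length] at this
    omega
  set p := qs.getLast hqne with hp
  set rs := qs.dropLast with hrs
  have hsplit : rs ++ [p] = qs := List.dropLast_append_getLast hqne
  have hflat2 : rs.flatten ++ p = prefixWord a N := by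
    have := congrArg List.flatten hsplit
    simp only [List.flatten_append] at this
    simpa [hflatq] using this
  set x := rs.flatten.length with hx
  set y := p.length with hy
  have hxy : x + y = N := by
    have := congrArg List.length hflat2
    rw [List.length_append, prefixWord_length] at this
    exact this
  have hpmem : p ∈ qs := List.getLast_mem hqne
  have hpne : p ≠ [] := by
    have h := hpmem
    rw [hqs] at h
    have := (List.mem_filter.mp h).2
    simpa using this
  have hy1 : 1 ≤ y := List.length_pos_iff.mpr hpne
  have hpfac : p = factor a x y := by
    apply List.ext_getElem?
    intro i
    rcases Nat.lt_or_ge i y with hi | hi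
    · have h1 : (rs.flatten ++ p)[x + i]? = p[i]? := by
        rw [List.getElem?_append_right (by omega)]
        congr 1
        omega
      rw [hflat2] at h1
      rw [show prefixWord a N = factor a 0 N from rfl] at h1
      rw [factor_getElem? a 0 N (x + i) (by omega)] at h1
      rw [factor_getElem? a x y i hi]
      rw [← h1]
      norm_num
    · rw [List.getElem?_eq_none (by omega), List.getElem?_eq_none (by simp [factor_length]; omega)]
  have hpalfac : IsPalFactor a x y :=
    (palindrome_factor_iff a x y).mp (hpfac ▸ hpalq p hpmem)
  have hrsflat : rs.flatten = prefixWord a x := by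
    have h1 : (rs.flatten ++ p).take x = rs.flatten := List.take_left' rfl
    rw [hflat2] at h1
    rw [← h1, prefixWord_take a (by omega)]
  have hPx : P a x ≤ rs.length := by
    apply palLen_le
    exact ⟨rs, rfl, fun q hq => hpalq q (List.dropLast_subset _ hq), hrsflat⟩
  have hrslen : rs.length = qs.length - 1 := by
    rw [hrs, List.length_dropLast]
  have hq1 : 1 ≤ qs.length := by
    rcases qs with _ | _
    · simp at hqne
    · simp
  exact ⟨x, y, hxy, hy1, hpalfac, by omega⟩

lemma build (a : ℕ → α) {x y : ℕ} (h : IsPalFactor a x y) :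
    P a (x + y) ≤ P a x + 1 := by
  obtain ⟨ps, hlen, hpal, hflat⟩ := palLen_spec (prefixWord a x)
  apply palLen_le
  refine ⟨ps ++ [factor a x y], by simp [hlen, ← P_def], ?_, ?_⟩
  · intro q hq
    rcases List.mem_append.mp hq with h1 | h1
    · exact hpal q h1
    · simp only [List.mem_singleton] at h1
      rw [h1]
      exact (palindrome_factor_iff a x y).mpr h
  · rw [List.flatten_append]
    simp only [List.flatten_cons, List.flatten_nil, List.append_nil]
    rw [hflat]
    show prefixWord a x ++ factor a x y = prefixWord a (x + y)
    rw [show prefixWord a x = factor a 0 x from rfl,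
      show prefixWord a (x+y) = factor a 0 (x+y) from rfl]
    rw [← factor_append a 0 x y]
    norm_num

lemma struct (a : ℕ → α) (hC : InC a) :
    ∀ q, a (4*q+3) = a (4*q) ∧ a (4*q+2) = a (4*q+1) ∧ a (4*q+1) ≠ a (4*q) := by
  obtain ⟨c, f, w, h0, hrec, hne, hpre⟩ := hC
  -- quarter relations
  have key : ∀ n, ∀ i, i < 4^n →
      a (4^n + i) = f n (a i) ∧ a (2*4^n + i) = f n (a i) ∧ a (3*4^n + i) = a i := by
    intro n i hi
    have hpow : (0:ℕ) < 4^n := Nat.pow_pos (by norm_num)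
    have hpow4 : (4:ℕ)^(n+1) = 4*4^n := by rw [pow_succ]; ring
    have h := hrec n
    rw [hpre n, hpre (n+1)] at h
    set X := (List.range (4^n)).map a with hX
    have hXlen : X.length = 4^n := by simp [hX]
    have hXflen : (X.map (f n)).length = 4^n := by simp [hX]
    have hXe : ∀ i, i < 4^n → X[i]? = some (a i) := by
      intro i hi
      simp [hX, List.getElem?_range hi]
    have hXfe : ∀ i, i < 4^n → (X.map (f n))[i]? = some (f n (a i)) := by
      intro i hi
      rw [List.getElem?_map, hXe i hi]
      rfl
    have hq : ∀ j, j < 4^(n+1) →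
        (X ++ X.map (f n) ++ X.map (f n) ++ X)[j]? = some (a j) := by
      intro j hj
      rw [← h, List.getElem?_map, List.getElem?_range hj]
      rfl
    refine ⟨?_, ?_, ?_⟩
    · have h1 := hq (4^n + i) (by omega)
      rw [List.getElem?_append_left (by simp only [List.length_append, hXlen, hXflen]; omega),
        List.getElem?_append_left (by simp only [List.length_append, hXlen, hXflen]; omega),
        List.getElem?_append_right (by omega)] at h1
      rw [hXlen, show 4^n + i - 4^n = i by omega] at h1
      rw [hXfe i hi] at h1
      exact (Option.some.inj h1).symm
    · have h1 := hq (2*4^n + i) (by omega)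
      rw [List.getElem?_append_left (by simp only [List.length_append, hXlen, hXflen]; omega),
        List.getElem?_append_right (by simp only [List.length_append, hXlen, hXflen]; omega)] at h1
      rw [List.length_append, hXlen, hXflen, show 2*4^n + i - (4^n + 4^n) = i by omega] at h1
      rw [hXfe i hi] at h1
      exact (Option.some.inj h1).symm
    · have h1 := hq (3*4^n + i) (by omega)
      rw [List.getElem?_append_right (by simp only [List.length_append, hXlen, hXflen]; omega)] at h1
      rw [List.length_append, List.length_append, hXlen, hXflen,
        show 3*4^n + i - (4^n + 4^n + 4^n) = i by omega] at h1
      rw [hXe i hi] at h1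
      exact (Option.some.inj h1).symm
  -- base letters
  have ha0 : a 0 = c := by
    have := hpre 0
    rw [h0] at this
    have h1 : List.map a (List.range (4^0)) = [a 0] := rfl
    rw [h1] at this
    exact (List.cons.injEq _ _ _ _ ▸ congrArg id this).1.symm
  have hbase : a 3 = a 0 ∧ a 2 = a 1 ∧ a 1 ≠ a 0 := by
    have k0 := key 0 0 (by norm_num)
    simp only [pow_zero, Nat.mul_one, Nat.add_zero] at k0
    obtain ⟨k1, k2, k3⟩ := k0
    refine ⟨k3, by rw [k1, k2], ?_⟩
    rw [k1, ha0]
    intro hcon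
    apply hne 0
    rw [h0]
    simp [hcon]
  -- main structure, strong induction on q
  intro q
  induction q using Nat.strong_induction_on with
  | _ q IH =>
    rcases Nat.eq_zero_or_pos q with rfl | hq
    · simpa using hbase
    · -- find scale
      have h4q : 4*q ≠ 0 := by omega
      set n := Nat.log 4 (4*q) with hn
      have hlow : 4^n ≤ 4*q := Nat.pow_log_le_self 4 h4q
      have hhigh : 4*q < 4^(n+1) := Nat.lt_pow_succ_log_self (by norm_num) _
      have hpow4 : (4:ℕ)^(n+1) = 4*4^n := by rw [pow_succ]; ring
      have hn1 : 1 ≤ n := by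
        by_contra hcon
        have : n = 0 := by omega
        rw [this] at hhigh
        simp at hhigh
        omega
      have hdvd : (4:ℕ) ∣ 4^n := dvd_pow_self 4 (by omega)
      suffices hsuf : ∃ q', q' < q ∧ ∃ g : α → α, Function.Injective g ∧
          ∀ j, j ≤ 3 → a (4*q+j) = g (a (4*q'+j)) by
        obtain ⟨q', hq'lt, g, hginj, hg⟩ := hsuf
        obtain ⟨ih1, ih2, ih3⟩ := IH q' hq'lt
        have e0' := hg 0 (by omega)
        have e1' := hg 1 (by omega)
        have e2' := hg 2 (by omega)
        have e3' := hg 3 (by omega)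
        simp only [Nat.add_zero] at e0'
        refine ⟨?_, ?_, ?_⟩
        · rw [e3', e0', ih1]
        · rw [e2', e1', ih2]
        · rw [e1', e0']
          exact fun hcon => ih3 (hginj hcon)
      -- quarter case analysis
      have hQ : (4^n ≤ 4*q ∧ 4*q < 2*4^n) ∨ (2*4^n ≤ 4*q ∧ 4*q < 3*4^n)
          ∨ (3*4^n ≤ 4*q ∧ 4*q < 4*4^n) := by omega
      rcases hQ with ⟨hq1, hq2⟩ | ⟨hq1, hq2⟩ | ⟨hq1, hq2⟩
      · obtain ⟨q', hq'⟩ : ∃ q', 4*q - 4^n = 4*q' := ⟨(4*q - 4^n)/4, by omega⟩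
        refine ⟨q', by omega, f n, (f n).injective, ?_⟩
        intro j hj
        have hk := (key n (4*q'+j) (by omega)).1
        rw [show 4*q+j = 4^n + (4*q'+j) by omega] at *
        exact hk
      · obtain ⟨q', hq'⟩ : ∃ q', 4*q - 2*4^n = 4*q' := ⟨(4*q - 2*4^n)/4, by omega⟩
        refine ⟨q', by omega, f n, (f n).injective, ?_⟩
        intro j hj
        have hk := (key n (4*q'+j) (by omega)).2.1
        rw [show 4*q+j = 2*4^n + (4*q'+j) by omega] at *
        exact hk
      · obtain ⟨q', hq'⟩ : ∃ q', 4*q - 3*4^n = 4*q' := ⟨(4*q - 3*4^n)/4, by omega⟩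
        refine ⟨q', by omega, id, Function.injective_id, ?_⟩
        intro j hj
        have hk := (key n (4*q'+j) (by omega)).2.2
        rw [show 4*q+j = 3*4^n + (4*q'+j) by omega] at *
        simpa using hk
  

def Sym (a : ℕ → α) (m k : ℕ) : Prop :=
  ∀ i j, m ≤ i → i ≤ k → i + j = m + k → a (4*i) = a (4*j) ∧ a (4*i+1) = a (4*j+1)

section Structured

variable (a : ℕ → α)
variable (e0 : ∀ q, a (4*q+3) = a (4*q)) (e1 : ∀ q, a (4*q+2) = a (4*q+1))
variable (hne : ∀ q, a (4*q+1) ≠ a (4*q))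

include e0 e1 hne in
lemma kpl {x y : ℕ} (hp : IsPalFactor a x y) (hy : 4 ≤ y) : (2*x + y) % 4 = 0 := by
  have hmir : ∀ i j, x ≤ i → x ≤ j → i + j + 1 = 2*x + y → a i = a j := by
    intro i j hi hj hij
    obtain ⟨s, rfl⟩ : ∃ s, i = x + s := ⟨i - x, by omega⟩
    obtain ⟨t, rfl⟩ : ∃ t, j = x + t := ⟨j - x, by omega⟩
    exact hp s t (by omega)
  rcases (by omega : (2*x+y) % 4 = 0 ∨ (2*x+y) % 4 = 1 ∨ (2*x+y) % 4 = 2 ∨ (2*x+y) % 4 = 3)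
    with h4 | h4 | h4 | h4
  · exact h4
  · -- odd case, mirror of an inner edge is an outer edge
    exfalso
    obtain ⟨u, hu1, hu2, hu3⟩ : ∃ u, x ≤ 4*u+1 ∧ 4*u+2 ≤ x+y-1 ∧ 4*u+1 ≤ x+3 := by
      rcases le_or_gt (x % 4) 1 with h | h
      · exact ⟨x/4, by omega, by omega, by omega⟩
      · exact ⟨x/4+1, by omega, by omega, by omega⟩
    obtain ⟨v, hv⟩ : ∃ v, (4*u+2) + (4*v+2) + 1 = 2*x + y :=
      ⟨(2*x+y-4*u-5)/4, by omega⟩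
    have ha := hmir (4*u+2) (4*v+2) (by omega) (by omega) (by omega)
    have hb := hmir (4*u+1) (4*v+3) (by omega) (by omega) (by omega)
    have hc : a (4*v+2) = a (4*v+3) := by
      rw [← ha, ← hb, e1 u]
    rw [e1 v, e0 v] at hc
    exact hne v hc
  · -- center ≡ 2 mod 4
    exfalso
    obtain ⟨q, hq1, hq2⟩ : ∃ q, x ≤ 4*q ∧ 4*q ≤ x+3 := ⟨(x+3)/4, by omega⟩
    obtain ⟨r, hr⟩ : ∃ r, 4*q + (4*r+1) + 1 = 2*x + y := ⟨(2*x+y-4*q-2)/4, by omega⟩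
    have hpq : a (4*q) = a (4*r+1) := hmir _ _ (by omega) (by omega) hr
    have cl : ∀ u, x ≤ 4*u+3 → 4*u+5 ≤ x+y → a (4*u+4) = a (4*u) := by
      intro u h1 h2
      obtain ⟨v, hv⟩ : ∃ v, (4*u+3) + (4*v+2) + 1 = 2*x + y :=
        ⟨(2*x+y-4*u-6)/4, by omega⟩
      have h3 := hmir (4*u+3) (4*v+2) (by omega) (by omega) hv
      have h4' := hmir (4*u+4) (4*v+1) (by omega) (by omega) (by omega)
      rw [h4', ← e1 v, ← h3, e0 u]
    have chain : ∀ b d, x ≤ 4*b+3 → 4*b+4*d ≤ x+y-1 → a (4*b+4*d) = a (4*b) := by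
      intro b d
      induction d with
      | zero => intro _ _; norm_num
      | succ d ih =>
        intro hb hd
        have h1 : a (4*(b+d)+4) = a (4*(b+d)) := cl (b+d) (by omega) (by omega)
        have h2 := ih hb (by omega)
        rw [show 4*b+4*(d+1) = 4*(b+d)+4 by ring, h1, show 4*(b+d) = 4*b+4*d by ring, h2]
    rcases le_or_gt q r with h | h
    · have hch := chain q (r - q) (by omega) (by omega)
      rw [show 4*q+4*(r-q) = 4*r by omega] at hch
      exact hne r (hpq.symm.trans hch.symm)
    · have hch := chain r (q - r) (by omega) (by omega)
      rw [show 4*r+4*(q-r) = 4*q by omega] at hch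
      exact hne r (hch.symm.trans hpq).symm
  · -- the other odd case
    exfalso
    obtain ⟨u, hu1, hu2, hu3⟩ : ∃ u, x ≤ 4*u+1 ∧ 4*u+2 ≤ x+y-1 ∧ 4*u+1 ≤ x+3 := by
      rcases le_or_gt (x % 4) 1 with h | h
      · exact ⟨x/4, by omega, by omega, by omega⟩
      · exact ⟨x/4+1, by omega, by omega, by omega⟩
    obtain ⟨v, hv⟩ : ∃ v, (4*u+2) + (4*v) + 1 = 2*x + y :=
      ⟨(2*x+y-4*u-3)/4, by omega⟩
    have ha := hmir (4*u+2) (4*v) (by omega) (by omega) (by omega)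
    have hb := hmir (4*u+1) (4*v+1) (by omega) (by omega) (by omega)
    apply hne v
    rw [← hb, ← ha, e1 u]

include e0 e1 in
lemma symP1 {m k y : ℕ} (hmk : m < k) (hy : 4*m + y = 4*k)
    (hp : IsPalFactor a (4*m+2) y) : Sym a m k := by
  have aux : ∀ i j, m ≤ i → i ≤ j → i + j = m + k →
      a (4*i) = a (4*j) ∧ a (4*i+1) = a (4*j+1) := by
    intro i j h1 h2 h3
    rcases eq_or_lt_of_le h2 with rfl | hlt
    · exact ⟨rfl, rfl⟩
    constructor
    · have h := hp (4*(i-m)+1) (4*(j-m)-2) (by omega)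
      rw [show 4*m+2+(4*(i-m)+1) = 4*i+3 by omega,
        show 4*m+2+(4*(j-m)-2) = 4*j by omega] at h
      rw [← e0 i]
      exact h
    · have h := hp (4*(i-m)) (4*(j-m)-1) (by omega)
      rw [show 4*m+2+4*(i-m) = 4*i+2 by omega,
        show 4*m+2+(4*(j-m)-1) = 4*j+1 by omega] at h
      rw [← e1 i]
      exact h
  intro i j h1 h2 h3
  rcases le_or_gt i j with h | h
  · exact aux i j h1 h h3
  · obtain ⟨hb, hb'⟩ := aux j i (by omega) (by omega) (by omega)
    exact ⟨hb.symm, hb'.symm⟩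

include e0 e1 in
lemma symP2 {m k y : ℕ} (hmk : m < k) (hy : 4*m + y = 4*k + 2)
    (hp : IsPalFactor a (4*m+1) y) : Sym a m k := by
  have aux : ∀ i j, m ≤ i → i ≤ j → i + j = m + k →
      a (4*i) = a (4*j) ∧ a (4*i+1) = a (4*j+1) := by
    intro i j h1 h2 h3
    rcases eq_or_lt_of_le h2 with rfl | hlt
    · exact ⟨rfl, rfl⟩
    constructor
    · have h := hp (4*(i-m)+2) (4*(j-m)-1) (by omega)
      rw [show 4*m+1+(4*(i-m)+2) = 4*i+3 by omega,
        show 4*m+1+(4*(j-m)-1) = 4*j by omega] at h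
      rw [← e0 i]
      exact h
    · have h := hp (4*(i-m)) (4*(j-m)+1) (by omega)
      rw [show 4*m+1+4*(i-m) = 4*i+1 by omega,
        show 4*m+1+(4*(j-m)+1) = 4*j+2 by omega] at h
      rw [e1 j] at h
      exact h
  intro i j h1 h2 h3
  rcases le_or_gt i j with h | h
  · exact aux i j h1 h h3
  · obtain ⟨hb, hb'⟩ := aux j i (by omega) (by omega) (by omega)
    exact ⟨hb.symm, hb'.symm⟩

include e0 e1 in
lemma symP3 {m k y : ℕ} (hmk : m + 2 ≤ k) (hy : 4*m + 3 + y = 4*k + 1)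
    (hp : IsPalFactor a (4*m+3) y) : Sym a (m+1) (k-1) := by
  have aux : ∀ i j, m+1 ≤ i → i ≤ j → i + j = m + k →
      a (4*i) = a (4*j) ∧ a (4*i+1) = a (4*j+1) := by
    intro i j h1 h2 h3
    constructor
    · have h := hp (4*(i-m)) (4*(j-m)-3) (by omega)
      rw [show 4*m+3+4*(i-m) = 4*i+3 by omega,
        show 4*m+3+(4*(j-m)-3) = 4*j by omega] at h
      rw [← e0 i]
      exact h
    · have h := hp (4*(i-m)-2) (4*(j-m)-1) (by omega)
      rw [show 4*m+3+(4*(i-m)-2) = 4*i+1 by omega,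
        show 4*m+3+(4*(j-m)-1) = 4*j+2 by omega] at h
      rw [e1 j] at h
      exact h
  intro i j h1 h2 h3
  rcases le_or_gt i j with h | h
  · exact aux i j (by omega) h (by omega)
  · obtain ⟨hb, hb'⟩ := aux j i (by omega) (by omega) (by omega)
    exact ⟨hb.symm, hb'.symm⟩

include e0 e1 in
lemma symQ1 {m k y : ℕ} (hmk : m ≤ k) (hy : 4*m + y = 4*k + 4)
    (hsym : Sym a m k) : IsPalFactor a (4*m) y := by
  intro s t hst
  obtain ⟨u, r, hur, hr⟩ : ∃ u r, s = 4*u + r ∧ r < 4 :=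
    ⟨s/4, s%4, by omega, by omega⟩
  obtain ⟨v, r', hvr, hr'⟩ : ∃ v r', t = 4*v + r' ∧ r' < 4 :=
    ⟨t/4, t%4, by omega, by omega⟩
  have hrr : r + r' = 3 := by omega
  have huv : (m+u) + (m+v) = m + k := by omega
  obtain ⟨hb, hb'⟩ := hsym (m+u) (m+v) (by omega) (by omega) huv
  rcases (by omega : r = 0 ∧ r' = 3 ∨ r = 1 ∧ r' = 2 ∨ r = 2 ∧ r' = 1 ∨ r = 3 ∧ r' = 0)
    with ⟨rfl, rfl⟩ | ⟨rfl, rfl⟩ | ⟨rfl, rfl⟩ | ⟨rfl, rfl⟩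
  · rw [show 4*m+s = 4*(m+u) by omega, show 4*m+t = 4*(m+v)+3 by omega, e0 (m+v)]
    exact hb
  · rw [show 4*m+s = 4*(m+u)+1 by omega, show 4*m+t = 4*(m+v)+2 by omega, e1 (m+v)]
    exact hb'
  · rw [show 4*m+s = 4*(m+u)+2 by omega, show 4*m+t = 4*(m+v)+1 by omega, e1 (m+u)]
    exact hb'
  · rw [show 4*m+s = 4*(m+u)+3 by omega, show 4*m+t = 4*(m+v) by omega, e0 (m+u)]
    exact hb

include e0 e1 in
lemma symQ2 (k : ℕ) : IsPalFactor a (4*k) 4 := by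
  intro s t hst
  rcases (by omega : s = 0 ∧ t = 3 ∨ s = 1 ∧ t = 2 ∨ s = 2 ∧ t = 1 ∨ s = 3 ∧ t = 0)
    with ⟨rfl, rfl⟩ | ⟨rfl, rfl⟩ | ⟨rfl, rfl⟩ | ⟨rfl, rfl⟩
  · rw [show 4*k+0 = 4*k by omega]
    exact (e0 k).symm
  · exact (e1 k).symm
  · exact e1 k
  · rw [show 4*k+0 = 4*k by omega]
    exact e0 k

lemma symShrink {m k : ℕ} (h : Sym a m k) (hk : m + 2 ≤ k) : Sym a (m+1) (k-1) :=
  fun i j h1 h2 h3 => h i j (by omega) (by omega) (by omega)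

end Structured

end Stmt5Aux

theorem stmt5 {α : Type*} (a : ℕ → α) (hC : InC a) (k : ℕ) :
    P a (4 * k + 2) ≥ P a (4 * k + 4) + 1 ∧
    P a (4 * k + 3) ≥ P a (4 * k + 4) + 1 ∧
    P a (4 * k + 1) ≥ P a (4 * k + 4) := by
  classical
  have hs := Stmt5Aux.struct a hC
  have e0 : ∀ q, a (4*q+3) = a (4*q) := fun q => (hs q).1
  have e1 : ∀ q, a (4*q+2) = a (4*q+1) := fun q => (hs q).2.1
  have hne : ∀ q, a (4*q+1) ≠ a (4*q) := fun q => (hs q).2.2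
  have main : ∀ k, (P a (4*k) + 1 ≤ P a (4*k+1)) ∧ (P a (4*k+4) ≤ P a (4*k+1)) ∧
      (P a (4*k) + 1 ≤ P a (4*k+2)) ∧ (P a (4*k+4) + 1 ≤ P a (4*k+2)) ∧
      (P a (4*k+4) + 1 ≤ P a (4*k+3)) := by
    intro k
    induction k using Nat.strong_induction_on with
    | _ k IH =>
    have hH : P a (4*k) + 1 ≤ P a (4*k+1) := by
      obtain ⟨x, y, hxy, hy1, hp, hrest⟩ := Stmt5Aux.extract a (N := 4*k+1) (by omega)
      rcases (by omega : y = 1 ∨ y = 2 ∨ y = 3 ∨ 4 ≤ y) with rfl | rfl | rfl | h4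
      · rw [show x = 4*k by omega] at hrest
        exact hrest
      · obtain ⟨j, hj1, hj2⟩ : ∃ j, x = 4*j+3 ∧ 4*j+4 = 4*k := ⟨k-1, by omega, by omega⟩
        rw [hj1] at hrest
        have hBj := (IH j (by omega)).2.2.2.2
        rw [hj2] at hBj
        omega
      · obtain ⟨j, hj1, hj2⟩ : ∃ j, x = 4*j+2 ∧ 4*j+4 = 4*k := ⟨k-1, by omega, by omega⟩
        rw [hj1] at hrest
        have hAj := (IH j (by omega)).2.2.2.1
        rw [hj2] at hAj
        omega
      · have hres := Stmt5Aux.kpl a e0 e1 hne hp h4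
        obtain ⟨j, hj1⟩ : ∃ j, x = 4*j+3 := ⟨x/4, by omega⟩
        rw [hj1] at hp hrest
        have hjk : j + 2 ≤ k := by omega
        have hsym := Stmt5Aux.symP3 a e0 e1 hjk (by omega) hp
        have hBj := (IH j (by omega)).2.2.2.2
        have hpal2 := Stmt5Aux.symQ1 a e0 e1 (m := j+1) (k := k-1)
          (y := 4*(k-1)+4-4*(j+1)) (by omega) (by omega) hsym
        have hbuild := Stmt5Aux.build a hpal2
        rw [show 4*(j+1) + (4*(k-1)+4-4*(j+1)) = 4*k by omega,
          show 4*(j+1) = 4*j+4 by ring] at hbuild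
        omega
    have hCs : P a (4*k+4) ≤ P a (4*k+1) := by
      have hbQ2 := Stmt5Aux.build a (Stmt5Aux.symQ2 a e0 e1 k)
      obtain ⟨x, y, hxy, hy1, hp, hrest⟩ := Stmt5Aux.extract a (N := 4*k+1) (by omega)
      rcases (by omega : y = 1 ∨ y = 2 ∨ y = 3 ∨ 4 ≤ y) with rfl | rfl | rfl | h4
      · rw [show x = 4*k by omega] at hrest
        omega
      · obtain ⟨j, hj1, hj2⟩ : ∃ j, x = 4*j+3 ∧ 4*j+4 = 4*k := ⟨k-1, by omega, by omega⟩
        rw [hj1] at hrest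
        have hBj := (IH j (by omega)).2.2.2.2
        rw [hj2] at hBj
        omega
      · obtain ⟨j, hj1, hj2⟩ : ∃ j, x = 4*j+2 ∧ 4*j+4 = 4*k := ⟨k-1, by omega, by omega⟩
        rw [hj1] at hrest
        have hAj := (IH j (by omega)).2.2.2.1
        rw [hj2] at hAj
        omega
      · have hres := Stmt5Aux.kpl a e0 e1 hne hp h4
        obtain ⟨j, hj1⟩ : ∃ j, x = 4*j+3 := ⟨x/4, by omega⟩
        rw [hj1] at hp hrest
        have hjk : j + 2 ≤ k := by omega
        have hsym := Stmt5Aux.symP3 a e0 e1 hjk (by omega) hp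
        have hBj := (IH j (by omega)).2.2.2.2
        have hpal2 := Stmt5Aux.symQ1 a e0 e1 (m := j+1) (k := k-1)
          (y := 4*(k-1)+4-4*(j+1)) (by omega) (by omega) hsym
        have hbuild := Stmt5Aux.build a hpal2
        rw [show 4*(j+1) + (4*(k-1)+4-4*(j+1)) = 4*k by omega,
          show 4*(j+1) = 4*j+4 by ring] at hbuild
        omega
    have hD : P a (4*k) + 1 ≤ P a (4*k+2) := by
      obtain ⟨x, y, hxy, hy1, hp, hrest⟩ := Stmt5Aux.extract a (N := 4*k+2) (by omega)
      rcases (by omega : y = 1 ∨ y = 2 ∨ y = 3 ∨ 4 ≤ y) with rfl | rfl | rfl | h4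
      · rw [show x = 4*k+1 by omega] at hrest
        omega
      · exfalso
        have h01 := hp 0 1 (by omega)
        rw [show x + 0 = 4*k by omega, show x + 1 = 4*k+1 by omega] at h01
        exact hne k h01.symm
      · obtain ⟨j, hj1, hj2⟩ : ∃ j, x = 4*j+3 ∧ 4*j+4 = 4*k := ⟨k-1, by omega, by omega⟩
        rw [hj1] at hrest
        have hBj := (IH j (by omega)).2.2.2.2
        rw [hj2] at hBj
        omega
      · have hres := Stmt5Aux.kpl a e0 e1 hne hp h4
        obtain ⟨j, hj1⟩ : ∃ j, x = 4*j+2 := ⟨x/4, by omega⟩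
        rw [hj1] at hp hrest
        have hjk : j < k := by omega
        have hsym := Stmt5Aux.symP1 a e0 e1 hjk (by omega) hp
        have hAj := (IH j (by omega)).2.2.2.1
        rcases le_or_gt (j+2) k with h | h
        · have hsym2 := Stmt5Aux.symShrink a hsym h
          have hpal2 := Stmt5Aux.symQ1 a e0 e1 (m := j+1) (k := k-1)
            (y := 4*(k-1)+4-4*(j+1)) (by omega) (by omega) hsym2
          have hbuild := Stmt5Aux.build a hpal2
          rw [show 4*(j+1) + (4*(k-1)+4-4*(j+1)) = 4*k by omega,
            show 4*(j+1) = 4*j+4 by ring] at hbuild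
          omega
        · have hk4 : 4*j+4 = 4*k := by omega
          rw [hk4] at hAj
          omega
    have hA : P a (4*k+4) + 1 ≤ P a (4*k+2) := by
      obtain ⟨x, y, hxy, hy1, hp, hrest⟩ := Stmt5Aux.extract a (N := 4*k+2) (by omega)
      rcases (by omega : y = 1 ∨ y = 2 ∨ y = 3 ∨ 4 ≤ y) with rfl | rfl | rfl | h4
      · rw [show x = 4*k+1 by omega] at hrest
        omega
      · exfalso
        have h01 := hp 0 1 (by omega)
        rw [show x + 0 = 4*k by omega, show x + 1 = 4*k+1 by omega] at h01
        exact hne k h01.symm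
      · obtain ⟨j, hj1, hj2⟩ : ∃ j, x = 4*j+3 ∧ 4*j+4 = 4*k := ⟨k-1, by omega, by omega⟩
        rw [hj1] at hrest
        have hBj := (IH j (by omega)).2.2.2.2
        rw [hj2] at hBj
        have hbQ2 := Stmt5Aux.build a (Stmt5Aux.symQ2 a e0 e1 k)
        omega
      · have hres := Stmt5Aux.kpl a e0 e1 hne hp h4
        obtain ⟨j, hj1⟩ : ∃ j, x = 4*j+2 := ⟨x/4, by omega⟩
        rw [hj1] at hp hrest
        have hjk : j < k := by omega
        have hsym := Stmt5Aux.symP1 a e0 e1 hjk (by omega) hp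
        have hDj := (IH j (by omega)).2.2.1
        have hpal2 := Stmt5Aux.symQ1 a e0 e1 (m := j) (k := k)
          (y := 4*k+4-4*j) (by omega) (by omega) hsym
        have hbuild := Stmt5Aux.build a hpal2
        rw [show 4*j + (4*k+4-4*j) = 4*k+4 by omega] at hbuild
        omega
    have hB : P a (4*k+4) + 1 ≤ P a (4*k+3) := by
      obtain ⟨x, y, hxy, hy1, hp, hrest⟩ := Stmt5Aux.extract a (N := 4*k+3) (by omega)
      rcases (by omega : y = 1 ∨ y = 2 ∨ y = 3 ∨ 4 ≤ y) with rfl | rfl | rfl | h4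
      · rw [show x = 4*k+2 by omega] at hrest
        omega
      · rw [show x = 4*k+1 by omega] at hrest
        omega
      · exfalso
        have h02 := hp 0 2 (by omega)
        rw [show x + 0 = 4*k by omega, show x + 2 = 4*k+2 by omega] at h02
        exact hne k (h02.trans (e1 k)).symm
      · have hres := Stmt5Aux.kpl a e0 e1 hne hp h4
        obtain ⟨j, hj1⟩ : ∃ j, x = 4*j+1 := ⟨x/4, by omega⟩
        rw [hj1] at hp hrest
        have hjk : j < k := by omega
        have hsym := Stmt5Aux.symP2 a e0 e1 hjk (by omega) hp
        have hHj := (IH j (by omega)).1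
        have hpal2 := Stmt5Aux.symQ1 a e0 e1 (m := j) (k := k)
          (y := 4*k+4-4*j) (by omega) (by omega) hsym
        have hbuild := Stmt5Aux.build a hpal2
        rw [show 4*j + (4*k+4-4*j) = 4*k+4 by omega] at hbuild
        omega
    exact ⟨hH, hCs, hD, hA, hB⟩
  obtain ⟨h1, h2, h3, h4, h5⟩ := main k
  exact ⟨h4, h5, h2⟩
end

section
/- Let a : ℕ → α be a sequence in the class 𝒞 and let P_a(n) denote the palindromic length of its prefix of length n. Then for every k ≥ 0: P_a(4k+1) ≤ P_a(4k+4) + 2, P_a(4k+2) ≤ P_a(4k+4) + 2, and P_a(4k+3) ≤ P_a(4k+4) + 1. -/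
namespace Aux

lemma flatten_map_singleton {α : Type*} (w : List α) :
    (w.map (fun c => [c])).flatten = w := by
  induction w with
  | nil => rfl
  | cons c w ih => simp [ih]

lemma palLen_le {α : Type*} (w : List α) (ps : List (List α))
    (h1 : ∀ p ∈ ps, p.Palindrome) (h2 : ps.flatten = w) : palLen w ≤ ps.length :=
  Nat.sInf_le ⟨ps, rfl, h1, h2⟩

lemma palLen_spec {α : Type*} (w : List α) : ∃ ps : List (List α),
    ps.length = palLen w ∧ (∀ p ∈ ps, p.Palindrome) ∧ ps.flatten = w := by
  have hmem : w.length ∈ {k | ∃ ps : List (List α),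
      ps.length = k ∧ (∀ p ∈ ps, p.Palindrome) ∧ ps.flatten = w} := by
    refine ⟨w.map (fun c => [c]), by simp, ?_, flatten_map_singleton w⟩
    intro p hp; simp at hp; obtain ⟨c, _, rfl⟩ := hp; exact List.Palindrome.singleton c
  exact Nat.sInf_mem ⟨w.length, hmem⟩

lemma mid {α : Type*} (p t u : List α) (hp : p.reverse = p) (hpe : p = t ++ u)
    (hl : u.length ≤ t.length) :
    t = u.reverse ++ t.drop u.length ∧ (t.drop u.length).reverse = t.drop u.length := by
  have h1 : u.reverse ++ t.reverse = t ++ u := by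
    rw [← List.reverse_append, ← hpe, hp, hpe]
  have htake : t.take u.length = u.reverse := by
    have h2 := congrArg (List.take u.length) h1
    rw [List.take_append_of_le_length (by simp), List.take_append_of_le_length hl,
      List.take_of_length_le (by simp)] at h2
    exact h2.symm
  have hdrop : t.reverse = t.drop u.length ++ u := by
    have h2 := congrArg (List.drop u.length) h1
    rwa [List.drop_append_of_le_length (by simp), List.drop_append_of_le_length hl,
      List.drop_of_length_le (by simp), List.nil_append] at h2
  have ht : t = u.reverse ++ t.drop u.length := by
    conv_lhs => rw [← List.take_append_drop u.length t, htake]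
  refine ⟨ht, ?_⟩
  have hcc : (t.drop u.length).reverse ++ u = t.drop u.length ++ u := by
    rw [← hdrop]
    conv_rhs => rw [ht]
    rw [List.reverse_append, List.reverse_reverse]
  exact List.append_cancel_right hcc

lemma suffix1 {α : Type*} {p t : List α} {c : α} (hp : p.Palindrome) (he : p = t ++ [c]) :
    ∃ ts : List (List α), ts.length ≤ 2 ∧ (∀ q ∈ ts, q.Palindrome) ∧ ts.flatten = t := by
  rcases Nat.lt_or_ge t.length 1 with h | h
  · exact ⟨[], by simp, by simp, by simpa using (List.eq_nil_of_length_eq_zero (by omega)).symm⟩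
  · obtain ⟨h1, h2⟩ := mid p t [c] hp.reverse_eq he (by simpa)
    have h1' : t = [c] ++ t.drop 1 := by simpa using h1
    refine ⟨[[c], t.drop 1], by simp, ?_, ?_⟩
    · intro q hq; simp at hq
      rcases hq with rfl | rfl
      · exact List.Palindrome.singleton c
      · exact List.Palindrome.of_reverse_eq (by simpa using h2)
    · conv_rhs => rw [h1']
      simp

lemma suffix3 {α : Type*} {p t : List α} {x y : α} (hp : p.Palindrome)
    (he : p = t ++ [y, y, x]) :
    ∃ ts : List (List α), ts.length ≤ 3 ∧ (∀ q ∈ ts, q.Palindrome) ∧ ts.flatten = t := by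
  rcases Nat.lt_or_ge t.length 3 with h | h
  · refine ⟨t.map (fun c => [c]), by simp; omega, ?_, flatten_map_singleton t⟩
    intro q hq; simp at hq; obtain ⟨c, _, rfl⟩ := hq; exact List.Palindrome.singleton c
  · obtain ⟨h1, h2⟩ := mid p t [y, y, x] hp.reverse_eq he (by simpa)
    have h1' : t = [x, y, y] ++ t.drop 3 := by simpa using h1
    refine ⟨[[x], [y, y], t.drop 3], by simp, ?_, ?_⟩
    · intro q hq; simp at hq
      rcases hq with rfl | rfl | rfl
      · exact List.Palindrome.singleton x
      · exact List.Palindrome.of_reverse_eq (by simp)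
      · exact List.Palindrome.of_reverse_eq (by simpa using h2)
    · conv_rhs => rw [h1']
      simp

lemma key1_aux {α : Type*} (ps : List (List α)) : (∀ p ∈ ps, p.Palindrome) →
    ∀ (s : List α) (c : α), ps.flatten = s ++ [c] → palLen s ≤ ps.length + 1 := by
  induction ps using List.reverseRecOn with
  | nil => intro _ s c h; simp at h
  | append_singleton qs p ih =>
    intro hpal s c h
    rw [List.flatten_append, List.flatten_cons, List.flatten_nil, List.append_nil] at h
    have hq : ∀ q ∈ qs, q.Palindrome := fun q hq => hpal q (by simp [hq])
    have hlen : (qs ++ [p]).length = qs.length + 1 := by simp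
    rcases eq_or_ne p [] with rfl | hp
    · rw [List.append_nil] at h
      have := ih hq s c h
      omega
    · have hpp : p.Palindrome := hpal p (by simp)
      rcases List.append_eq_append_iff.mp h with ⟨t, hs, hpe⟩ | ⟨c', hA, hc⟩
      · obtain ⟨ts, hlents, hts, hfl⟩ := suffix1 hpp hpe
        have hle : palLen s ≤ (qs ++ ts).length := by
          apply palLen_le
          · intro q hq'; rcases List.mem_append.mp hq' with h' | h'
            exacts [hq q h', hts q h']
          · rw [List.flatten_append, hfl, hs]
        simp at hle
        omega
      · obtain ⟨b, p', rfl⟩ : ∃ b p', p = b :: p' := by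
          cases p with
          | nil => exact absurd rfl hp
          | cons b p' => exact ⟨b, p', rfl⟩
        rcases c' with _ | ⟨a1, c'⟩
        · rw [List.append_nil] at hA
          have := palLen_le s qs hq (by rw [hA])
          omega
        · exfalso
          have hl := congrArg List.length hc
          simp at hl

lemma key1 {α : Type*} (s : List α) (c : α) : palLen s ≤ palLen (s ++ [c]) + 1 := by
  obtain ⟨ps, hlen, hpal, hfl⟩ := palLen_spec (s ++ [c])
  rw [← hlen]; exact key1_aux ps hpal s c hfl

lemma key3_aux {α : Type*} (ps : List (List α)) : (∀ p ∈ ps, p.Palindrome) →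
    ∀ (s : List α) (x y : α), ps.flatten = s ++ [y, y, x] → palLen s ≤ ps.length + 2 := by
  induction ps using List.reverseRecOn with
  | nil => intro _ s x y h; simp at h
  | append_singleton qs p ih =>
    intro hpal s x y h
    rw [List.flatten_append, List.flatten_cons, List.flatten_nil, List.append_nil] at h
    have hq : ∀ q ∈ qs, q.Palindrome := fun q hq => hpal q (by simp [hq])
    have hlen : (qs ++ [p]).length = qs.length + 1 := by simp
    rcases eq_or_ne p [] with rfl | hp
    · rw [List.append_nil] at h
      have := ih hq s x y h
      omega
    · have hpp : p.Palindrome := hpal p (by simp)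
      rcases List.append_eq_append_iff.mp h with ⟨t, hs, hpe⟩ | ⟨c', hA, hc⟩
      · obtain ⟨ts, hlents, hts, hfl⟩ := suffix3 hpp hpe
        have hle : palLen s ≤ (qs ++ ts).length := by
          apply palLen_le
          · intro q hq'; rcases List.mem_append.mp hq' with h' | h'
            exacts [hq q h', hts q h']
          · rw [List.flatten_append, hfl, hs]
        simp at hle
        omega
      · obtain ⟨b, p', rfl⟩ : ∃ b p', p = b :: p' := by
          cases p with
          | nil => exact absurd rfl hp
          | cons b p' => exact ⟨b, p', rfl⟩
        rcases c' with _ | ⟨a1, c'⟩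
        · rw [List.append_nil] at hA
          have := palLen_le s qs hq (by rw [hA])
          omega
        rcases c' with _ | ⟨a2, c'⟩
        · -- c' = [a1]; hc : [y,y,x] = [a1] ++ b :: p'
          simp at hc
          obtain ⟨rfl, rfl, rfl⟩ := hc
          have h1 : palLen s ≤ palLen (s ++ [y]) + 1 := key1 s y
          have h2 : palLen (s ++ [y]) ≤ qs.length := palLen_le _ qs hq hA
          omega
        rcases c' with _ | ⟨a3, c'⟩
        · -- c' = [a1, a2]; hc : [y,y,x] = [a1,a2] ++ b :: p'
          simp at hc
          obtain ⟨rfl, rfl, rfl, rfl⟩ := hc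
          have h1 : palLen s ≤ palLen (s ++ [y]) + 1 := key1 s y
          have h2 : palLen (s ++ [y]) ≤ palLen (s ++ [y] ++ [y]) + 1 := key1 _ y
          have h3 : palLen (s ++ [y] ++ [y]) ≤ qs.length := by
            apply palLen_le _ qs hq
            rw [hA]
            simp
          omega
        · exfalso
          have hl := congrArg List.length hc
          simp at hl

lemma key3 {α : Type*} (s : List α) (x y : α) : palLen s ≤ palLen (s ++ [y, y, x]) + 2 := by
  obtain ⟨ps, hlen, hpal, hfl⟩ := palLen_spec (s ++ [y, y, x])
  rw [← hlen]; exact key3_aux ps hpal s x y hfl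

end Aux

namespace Aux2

lemma get_of_eq {α : Type*} (a : ℕ → α) (m j : ℕ) (hj : j < m) (L : List α)
    (hL : L = (List.range m).map a) : a j = L[j]'(by simp [hL]; omega) := by
  subst hL; simp

lemma middle_eq {α : Type*} (a : ℕ → α) (hC : InC a) (k : ℕ) :
    a (4 * k + 1) = a (4 * k + 2) := by
  obtain ⟨c, f, w, h0, hrec, -, hpref⟩ := hC
  have main : ∀ n, ∀ k, 4 * k + 3 < 4 ^ (n + 1) → a (4 * k + 1) = a (4 * k + 2) := by
    intro n
    induction n with
    | zero =>
      intro k hk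
      have hk0 : k = 0 := by omega
      subst hk0
      have e := hpref 1
      rw [hrec 0, h0] at e
      -- e : [c] ++ [c].map (f 0) ++ [c].map (f 0) ++ [c] = (range 4).map a
      have e4 : (List.range (4 ^ 1)).map a = [a 0, a 1, a 2, a 3] := by
        norm_num [List.range_succ]
      rw [e4] at e
      simp at e
      obtain ⟨-, h1, h2, -⟩ := e
      simp only [Nat.mul_zero, Nat.zero_add]
      rw [← h1, ← h2]
    | succ n ih =>
      intro k hk
      set N := 4 ^ (n + 1) with hN
      have hN4 : N = 4 * 4 ^ n := by rw [hN, pow_succ]; ring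
      have hNpos : 0 < N := by positivity
      have hw2 : w (n + 2) = ((List.range N).map a ++ ((List.range N).map a).map (f (n + 1))
          ++ ((List.range N).map a).map (f (n + 1)) ++ (List.range N).map a) := by
        rw [hrec (n + 1), hpref (n + 1)]
      have hlen2 : 4 ^ (n + 2) = 4 * N := by rw [hN, pow_succ]; ring
      -- pointwise values in each quarter
      have q : ∀ d, d < 4 → ∀ i, i < N → a (d * N + i) =
          (if d = 0 ∨ d = 3 then a i else f (n + 1) (a i)) := by
        intro d hd i hi
        have hj : d * N + i < 4 ^ (n + 2) := by rw [hlen2]; nlinarith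
        have hEq : (List.range (4 ^ (n + 2))).map a = (List.range N).map a
            ++ ((List.range N).map a).map (f (n + 1))
            ++ ((List.range N).map a).map (f (n + 1)) ++ (List.range N).map a := by
          rw [← hpref (n + 2), hw2]
        have hgl : d * N + i < ((List.range (4 ^ (n + 2))).map a).length := by simp; omega
        have h1 := (get_of_eq a (4 ^ (n + 2)) (d * N + i) hj _ rfl).trans
          (List.getElem_of_eq hEq hgl)
        rw [h1]
        have hWlen : ((List.range N).map a).length = N := by simp
        have hMlen : (((List.range N).map a).map (f (n + 1))).length = N := by simp
        interval_cases d
        · rw [List.getElem_append_left (by simp; try omega), List.getElem_append_left (by simp; try omega),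
            List.getElem_append_left (by simp; try omega)]
          simp
        · rw [List.getElem_append_left (by simp; try omega), List.getElem_append_left (by simp; try omega),
            List.getElem_append_right (by simp; try omega)]
          simp only [hWlen, List.length_map, List.length_range, one_mul, Nat.add_sub_cancel_left]
          simp [hi]
        · rw [List.getElem_append_left (by simp; try omega),
            List.getElem_append_right (by simp; try omega)]
          simp only [List.length_append, List.length_map, List.length_range,
            show 2 * N + i - (N + N) = i from by omega]
          simp [hi]
        · rw [List.getElem_append_right (by simp; try omega)]
          simp only [List.length_append, List.length_map, List.length_range,
            show 3 * N + i - (N + N + N) = i from by omega]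
          simp [hi]
      rw [hlen2] at hk
      -- k < 4 * 4^n; which quarter?
      rcases Nat.lt_or_ge (4 * k + 3) N with h1 | h1
      · exact ih k h1
      rcases Nat.lt_or_ge (4 * k + 3) (2 * N) with h2 | h2
      · -- second quarter
        obtain ⟨k', hk'⟩ : ∃ k', k = 4 ^ n + k' := ⟨k - 4 ^ n, by omega⟩
        have hi1 : 4 * k + 1 = 1 * N + (4 * k' + 1) := by omega
        have hi2 : 4 * k + 2 = 1 * N + (4 * k' + 2) := by omega
        have hb : 4 * k' + 3 < N := by omega
        rw [hi1, hi2, q 1 (by norm_num) _ (by omega), q 1 (by norm_num) _ (by omega)]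
        simp [ih k' hb]
      rcases Nat.lt_or_ge (4 * k + 3) (3 * N) with h3 | h3
      · obtain ⟨k', hk'⟩ : ∃ k', k = 2 * 4 ^ n + k' := ⟨k - 2 * 4 ^ n, by omega⟩
        have hi1 : 4 * k + 1 = 2 * N + (4 * k' + 1) := by omega
        have hi2 : 4 * k + 2 = 2 * N + (4 * k' + 2) := by omega
        have hb : 4 * k' + 3 < N := by omega
        rw [hi1, hi2, q 2 (by norm_num) _ (by omega), q 2 (by norm_num) _ (by omega)]
        simp [ih k' hb]
      · obtain ⟨k', hk'⟩ : ∃ k', k = 3 * 4 ^ n + k' := ⟨k - 3 * 4 ^ n, by omega⟩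
        have hi1 : 4 * k + 1 = 3 * N + (4 * k' + 1) := by omega
        have hi2 : 4 * k + 2 = 3 * N + (4 * k' + 2) := by omega
        have hb : 4 * k' + 3 < N := by omega
        rw [hi1, hi2, q 3 (by norm_num) _ (by omega), q 3 (by norm_num) _ (by omega)]
        simp [ih k' hb]
  have hbig : 4 * k + 3 < 4 ^ (4 * k + 3 + 1) := by
    calc 4 * k + 3 < 4 ^ (4 * k + 3) := Nat.lt_pow_self (by norm_num)
    _ ≤ 4 ^ (4 * k + 3 + 1) := Nat.pow_le_pow_right (by norm_num) (by omega)
  exact main (4 * k + 3) k hbig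

end Aux2


namespace Final

lemma prefix_succ {α : Type*} (a : ℕ → α) (n : ℕ) :
    prefixWord a (n + 1) = prefixWord a n ++ [a n] := by
  simp [prefixWord, factor, List.range_succ]

end Final

theorem stmt6 {α : Type*} (a : ℕ → α) (hC : InC a) (k : ℕ) :
    P a (4 * k + 1) ≤ P a (4 * k + 4) + 2 ∧
    P a (4 * k + 2) ≤ P a (4 * k + 4) + 2 ∧
    P a (4 * k + 3) ≤ P a (4 * k + 4) + 1 := by
  have hmid : a (4 * k + 1) = a (4 * k + 2) := Aux2.middle_eq a hC k
  have e3 : prefixWord a (4 * k + 4) = prefixWord a (4 * k + 3) ++ [a (4 * k + 3)] :=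
    Final.prefix_succ a (4 * k + 3)
  have e2 : prefixWord a (4 * k + 3) = prefixWord a (4 * k + 2) ++ [a (4 * k + 2)] :=
    Final.prefix_succ a (4 * k + 2)
  have e1 : prefixWord a (4 * k + 2) = prefixWord a (4 * k + 1) ++ [a (4 * k + 1)] :=
    Final.prefix_succ a (4 * k + 1)
  refine ⟨?_, ?_, ?_⟩
  · have e : prefixWord a (4 * k + 4) =
        prefixWord a (4 * k + 1) ++ [a (4 * k + 1), a (4 * k + 1), a (4 * k + 3)] := by
      rw [e3, e2, e1, ← hmid]
      simp
    show palLen (prefixWord a (4 * k + 1)) ≤ palLen (prefixWord a (4 * k + 4)) + 2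
    rw [e]
    exact Aux.key3 _ _ _
  · show palLen (prefixWord a (4 * k + 2)) ≤ palLen (prefixWord a (4 * k + 4)) + 2
    have h1 : palLen (prefixWord a (4 * k + 2)) ≤ palLen (prefixWord a (4 * k + 3)) + 1 := by
      rw [e2]; exact Aux.key1 _ _
    have h2 : palLen (prefixWord a (4 * k + 3)) ≤ palLen (prefixWord a (4 * k + 4)) + 1 := by
      rw [e3]; exact Aux.key1 _ _
    omega
  · show palLen (prefixWord a (4 * k + 3)) ≤ palLen (prefixWord a (4 * k + 4)) + 1
    rw [e3]; exact Aux.key1 _ _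
end

section
/- Let a : ℕ → α be a sequence in the class 𝒞 over the alphabet α, let β be another alphabet, and let f : α × α × α × α ≃ β be a bijection. Then the sequence b : ℕ → β defined by b(n) = f(a(4n), a(4n+1), a(4n+2), a(4n+3)) also belongs to the class 𝒞 (over β). -/
private lemma seg4 {γ : Type*} {A B C D B' C' D' : List γ}
    (hB : B.length = B'.length) (hC : C.length = C'.length)
    (h : A ++ B ++ C ++ D = A ++ B' ++ C' ++ D') : B = B' ∧ C = C' ∧ D = D' := by
  simp only [List.append_assoc] at h
  have h1 := List.append_cancel_left h
  obtain ⟨h2, h3⟩ := List.append_inj h1 hB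
  obtain ⟨h4, h5⟩ := List.append_inj h3 hC
  exact ⟨h2, h4, h5⟩

private lemma range_four {γ : Type*} (m : ℕ) (g : ℕ → γ) :
    (List.range (4 * m)).map g
      = (List.range m).map g ++ (List.range m).map (fun i => g (m + i))
        ++ (List.range m).map (fun i => g (m + m + i))
        ++ (List.range m).map (fun i => g (m + m + m + i)) := by
  have h4 : 4 * m = m + m + m + m := by ring
  rw [h4, List.range_add, List.range_add, List.range_add]
  simp only [List.map_append, List.map_map, Function.comp_def]

theorem stmt7 {α β : Type*} (a : ℕ → α) (hC : InC a)
    (f : α × α × α × α ≃ β) (b : ℕ → β)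
    (hb : ∀ n, b n = f (a (4 * n), a (4 * n + 1), a (4 * n + 2), a (4 * n + 3))) :
    InC b := by
  classical
  obtain ⟨c, F, w, hw0, hwrec, hne, hpre⟩ := hC
  set G : ℕ → β ≃ β := fun n =>
    f.symm.trans ((((F (n+1)).prodCongr ((F (n+1)).prodCongr
      ((F (n+1)).prodCongr (F (n+1))))).trans f)) with hG
  have hGf : ∀ n x y z t, G n (f (x, y, z, t))
      = f (F (n+1) x, F (n+1) y, F (n+1) z, F (n+1) t) := by
    intro n x y z t
    simp [hG, Equiv.prodCongr_apply, Prod.map]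
  -- key pointwise facts about a
  have key : ∀ n, ∀ i < 4 ^ n,
      a (4 ^ n + i) = F n (a i) ∧ a (4 ^ n + 4 ^ n + i) = F n (a i)
        ∧ a (4 ^ n + 4 ^ n + 4 ^ n + i) = a i := by
    intro n
    have e1 : (List.range (4 * 4 ^ n)).map a
        = (List.range (4 ^ n)).map a
          ++ (List.range (4 ^ n)).map (fun i => F n (a i))
          ++ (List.range (4 ^ n)).map (fun i => F n (a i))
          ++ (List.range (4 ^ n)).map a := by
      have h1 : 4 * 4 ^ n = 4 ^ (n + 1) := by ring
      rw [h1, ← hpre, hwrec, hpre, List.map_map]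
      rfl
    rw [range_four] at e1
    obtain ⟨h2, h3, h4⟩ := seg4 (by simp) (by simp) e1
    intro i hi
    refine ⟨List.map_inj_left.1 h2 i (List.mem_range.2 hi),
      List.map_inj_left.1 h3 i (List.mem_range.2 hi),
      List.map_inj_left.1 h4 i (List.mem_range.2 hi)⟩
  -- pointwise facts about b
  have keyb : ∀ n, ∀ k < 4 ^ n,
      b (4 ^ n + k) = G n (b k) ∧ b (4 ^ n + 4 ^ n + k) = G n (b k)
        ∧ b (4 ^ n + 4 ^ n + 4 ^ n + k) = b k := by
    intro n k hk
    have h41 : (4 : ℕ) ^ (n + 1) = 4 * 4 ^ n := by ring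
    have ha : ∀ j ≤ 3, a (4 ^ (n+1) + (4 * k + j)) = F (n+1) (a (4 * k + j))
        ∧ a (4 ^ (n+1) + 4 ^ (n+1) + (4 * k + j)) = F (n+1) (a (4 * k + j))
        ∧ a (4 ^ (n+1) + 4 ^ (n+1) + 4 ^ (n+1) + (4 * k + j)) = a (4 * k + j) := by
      intro j hj
      exact key (n+1) (4 * k + j) (by omega)
    refine ⟨?_, ?_, ?_⟩
    · rw [hb, hb, hGf]
      have e0 := (ha 0 (by omega)).1
      have e1 := (ha 1 (by omega)).1
      have e2 := (ha 2 (by omega)).1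
      have e3 := (ha 3 (by omega)).1
      rw [show 4 * (4 ^ n + k) + 3 = 4 ^ (n+1) + (4 * k + 3) by omega, e3,
        show 4 * (4 ^ n + k) + 2 = 4 ^ (n+1) + (4 * k + 2) by omega, e2,
        show 4 * (4 ^ n + k) + 1 = 4 ^ (n+1) + (4 * k + 1) by omega, e1,
        show 4 * (4 ^ n + k) = 4 ^ (n+1) + (4 * k + 0) by omega, e0]
      norm_num
    · rw [hb, hb, hGf]
      have e0 := (ha 0 (by omega)).2.1
      have e1 := (ha 1 (by omega)).2.1
      have e2 := (ha 2 (by omega)).2.1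
      have e3 := (ha 3 (by omega)).2.1
      rw [show 4 * (4 ^ n + 4 ^ n + k) + 3 = 4 ^ (n+1) + 4 ^ (n+1) + (4 * k + 3) by omega, e3,
        show 4 * (4 ^ n + 4 ^ n + k) + 2 = 4 ^ (n+1) + 4 ^ (n+1) + (4 * k + 2) by omega, e2,
        show 4 * (4 ^ n + 4 ^ n + k) + 1 = 4 ^ (n+1) + 4 ^ (n+1) + (4 * k + 1) by omega, e1,
        show 4 * (4 ^ n + 4 ^ n + k) = 4 ^ (n+1) + 4 ^ (n+1) + (4 * k + 0) by omega, e0]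
      norm_num
    · rw [hb, hb]
      have e0 := (ha 0 (by omega)).2.2
      have e1 := (ha 1 (by omega)).2.2
      have e2 := (ha 2 (by omega)).2.2
      have e3 := (ha 3 (by omega)).2.2
      rw [show 4 * (4 ^ n + 4 ^ n + 4 ^ n + k) + 3
            = 4 ^ (n+1) + 4 ^ (n+1) + 4 ^ (n+1) + (4 * k + 3) by omega, e3,
        show 4 * (4 ^ n + 4 ^ n + 4 ^ n + k) + 2
            = 4 ^ (n+1) + 4 ^ (n+1) + 4 ^ (n+1) + (4 * k + 2) by omega, e2,
        show 4 * (4 ^ n + 4 ^ n + 4 ^ n + k) + 1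
            = 4 ^ (n+1) + 4 ^ (n+1) + 4 ^ (n+1) + (4 * k + 1) by omega, e1,
        show 4 * (4 ^ n + 4 ^ n + 4 ^ n + k)
            = 4 ^ (n+1) + 4 ^ (n+1) + 4 ^ (n+1) + (4 * k + 0) by omega, e0]
      norm_num
  refine ⟨b 0, G, fun n => (List.range (4 ^ n)).map b,
    rfl, ?_, ?_, fun n => rfl⟩
  · -- recurrence
    intro n
    show (List.range (4 ^ (n + 1))).map b
      = (List.range (4 ^ n)).map b ++ ((List.range (4 ^ n)).map b).map (G n)
        ++ ((List.range (4 ^ n)).map b).map (G n) ++ (List.range (4 ^ n)).map b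
    have h41 : (4 : ℕ) ^ (n + 1) = 4 * 4 ^ n := by ring
    rw [h41, range_four]
    simp only [List.map_map, Function.comp_def]
    refine congrArg₂ (· ++ ·) (congrArg₂ (· ++ ·) (congrArg₂ (· ++ ·) rfl ?_) ?_) ?_
    · apply List.map_congr_left
      intro k hk
      exact (keyb n k (List.mem_range.1 hk)).1
    · apply List.map_congr_left
      intro k hk
      exact (keyb n k (List.mem_range.1 hk)).2.1
    · apply List.map_congr_left
      intro k hk
      exact ((keyb n k (List.mem_range.1 hk)).2.2)
  · -- nondegeneracy
    intro n h
    apply hne (n + 1)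
    have h' : ((List.range (4 ^ n)).map b).map (G n) = (List.range (4 ^ n)).map b := h
    rw [List.map_map] at h'
    have hpt : ∀ k < 4 ^ n, G n (b k) = b k := by
      intro k hk
      exact List.map_inj_left.1 h' k (List.mem_range.2 hk)
    have hfix : ∀ i < 4 ^ (n + 1), F (n + 1) (a i) = a i := by
      intro i hi
      set k := i / 4 with hkdef
      have hk : k < 4 ^ n := by
        have h41 : (4:ℕ) ^ (n+1) = 4 * 4 ^ n := by ring
        omega
      have hpk := hpt k hk
      rw [hb, hGf] at hpk
      have hinj := f.injective hpk
      have h0 : F (n+1) (a (4 * k)) = a (4 * k) := congrArg Prod.fst hinj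
      have h1 : F (n+1) (a (4 * k + 1)) = a (4 * k + 1) :=
        congrArg Prod.fst (congrArg Prod.snd hinj)
      have h2 : F (n+1) (a (4 * k + 2)) = a (4 * k + 2) :=
        congrArg Prod.fst (congrArg Prod.snd (congrArg Prod.snd hinj))
      have h3 : F (n+1) (a (4 * k + 3)) = a (4 * k + 3) :=
        congrArg Prod.snd (congrArg Prod.snd (congrArg Prod.snd hinj))
      have hcase : i = 4 * k ∨ i = 4 * k + 1 ∨ i = 4 * k + 2 ∨ i = 4 * k + 3 := by
        omega
      rcases hcase with h | h | h | h <;> rw [h] <;> assumption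
    rw [hpre (n + 1), List.map_map]
    apply List.map_congr_left
    intro i hi
    exact hfix i (List.mem_range.1 hi)
end
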